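/- arXiv:1803.00665 — 11 statements merged into one kernel-verified Lean document; each statement's English description precedes it below -/
import Mathlib

section
/- If coarse-graining C₂ is finer than coarse-graining C₁ (every projector of C₁ is a sum of projectors of C₂), then S_O(C₁)(ρ) ≥ S_O(C₂)(ρ) for every density matrix ρ. -/
open scoped BigOperators ComplexOrder
open Matrix

/-- A coarse-graining: a family of nonzero, mutually orthogonal Hermitian projectors
summing to the identity. -/
def IsCoarseGraining {n : Type} [Fintype n] [DecidableEq n] {ι : Type} [Fintype ι]
    (P : ι → Matrix n n ℂ) : Prop :=
  (∀ i, (P i).IsHermitian) ∧ (∀ i, P i * P i = P i) ∧ (∀ i, P i ≠ 0) ∧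
  (∀ i j, i ≠ j → P i * P j = 0) ∧ (∑ i, P i = 1)

/-- A density matrix: positive semidefinite with unit trace. -/
def IsDensityMatrix {n : Type} [Fintype n] [DecidableEq n] (ρ : Matrix n n ℂ) : Prop :=
  ρ.PosSemidef ∧ ρ.trace = 1

/-- Probability of macrostate `i`: `p_i = tr(P_i ρ)`. -/
noncomputable def prob {n : Type} [Fintype n] [DecidableEq n] {ι : Type} [Fintype ι]
    (P : ι → Matrix n n ℂ) (ρ : Matrix n n ℂ) (i : ι) : ℝ :=
  ((P i * ρ).trace).re

/-- Volume of macrostate `i`: `tr(P_i)`. -/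
noncomputable def vol {n : Type} [Fintype n] [DecidableEq n] {ι : Type} [Fintype ι]
    (P : ι → Matrix n n ℂ) (i : ι) : ℝ :=
  ((P i).trace).re

/-- Observational entropy `S_O(C)(ρ) = -∑_{i : p_i ≠ 0} p_i ln (p_i / tr P_i)`.
(Terms with `p_i = 0` vanish since `0 * log _ = 0`.) -/
noncomputable def obsEntropy {n : Type} [Fintype n] [DecidableEq n] {ι : Type} [Fintype ι]
    (P : ι → Matrix n n ℂ) (ρ : Matrix n n ℂ) : ℝ :=
  -∑ i, prob P ρ i * Real.log (prob P ρ i / vol P i)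

/-- `Q` is finer than `P`: every projector of `P` is a sum of projectors of `Q`. -/
def Finer {n : Type} [Fintype n] [DecidableEq n] {ι κ : Type} [Fintype ι] [Fintype κ]
    (P : ι → Matrix n n ℂ) (Q : κ → Matrix n n ℂ) : Prop :=
  ∀ i, ∃ I : Finset κ, P i = ∑ j ∈ I, Q j


lemma log_sum_ineq {κ : Type} (I : Finset κ) (q v : κ → ℝ)
    (hq : ∀ j ∈ I, 0 ≤ q j) (hv : ∀ j ∈ I, 0 < v j) :
    (∑ j ∈ I, q j) * Real.log ((∑ j ∈ I, q j) / (∑ j ∈ I, v j)) ≤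
      ∑ j ∈ I, q j * Real.log (q j / v j) := by
  rcases eq_or_lt_of_le (Finset.sum_nonneg hq) with h0 | hpos
  · have hq0 : ∀ j ∈ I, q j = 0 := by
      intro j hj
      exact (Finset.sum_eq_zero_iff_of_nonneg hq).mp h0.symm j hj
    rw [← h0, zero_mul]
    refine Finset.sum_nonneg fun j hj => ?_
    rw [hq0 j hj, zero_mul]
  · set p := ∑ j ∈ I, q j with hp
    have hIne : I.Nonempty := by
      rcases I.eq_empty_or_nonempty with h | h
      · exfalso; rw [hp, h] at hpos; simp at hpos
      · exact h
    set V := ∑ j ∈ I, v j with hV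
    have hVpos : 0 < V := Finset.sum_pos hv hIne
    have key : ∀ j ∈ I, q j * Real.log (p / V) + (q j - p * v j / V) ≤
        q j * Real.log (q j / v j) := by
      intro j hj
      rcases eq_or_lt_of_le (hq j hj) with hq0 | hqpos
      · have hvj := hv j hj
        rw [← hq0, zero_mul, zero_mul, zero_add, zero_sub]
        have : 0 ≤ p * v j / V := by positivity
        linarith
      · have hvj := hv j hj
        have hx : (0:ℝ) < (p * v j) / (V * q j) := by positivity
        have hlog := Real.log_le_sub_one_of_pos hx
        have h2 : q j * Real.log ((p * v j) / (V * q j)) ≤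
            q j * ((p * v j) / (V * q j) - 1) :=
          mul_le_mul_of_nonneg_left hlog hqpos.le
        have h3 : q j * ((p * v j) / (V * q j) - 1) = p * v j / V - q j := by
          field_simp
        have h4 : Real.log ((p * v j) / (V * q j)) =
            Real.log (p / V) - Real.log (q j / v j) := by
          rw [Real.log_div (by positivity) (by positivity),
            Real.log_mul hpos.ne' hvj.ne', Real.log_mul hVpos.ne' hqpos.ne',
            Real.log_div hpos.ne' hVpos.ne', Real.log_div hqpos.ne' hvj.ne']
          ring
        rw [h4, h3] at h2
        nlinarith [h2]
    have hsum : ∑ j ∈ I, (q j * Real.log (p / V) + (q j - p * v j / V)) =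
        p * Real.log (p / V) := by
      rw [Finset.sum_add_distrib, Finset.sum_sub_distrib, ← Finset.sum_mul]
      have h5 : ∑ j ∈ I, p * v j / V = p := by
        rw [← Finset.sum_div, ← Finset.mul_sum, ← hV]
        field_simp
      rw [h5, ← hp]
      ring
    calc p * Real.log (p / V) = _ := hsum.symm
      _ ≤ _ := Finset.sum_le_sum key


open scoped BigOperators ComplexOrder
open Matrix

lemma aux_tr {n : Type} [Fintype n] [DecidableEq n] (B : Matrix n n ℂ) :
    ((Bᴴ * B).trace).re = ∑ i, ∑ k, Complex.normSq (B k i) := by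
  simp only [Matrix.trace, Matrix.diag, Matrix.mul_apply, Matrix.conjTranspose_apply,
    Complex.re_sum]
  refine Finset.sum_congr rfl fun i _ => Finset.sum_congr rfl fun k _ => ?_
  rw [show star (B k i) = (starRingEnd ℂ) (B k i) from rfl,
    ← Complex.normSq_eq_conj_mul_self, Complex.ofReal_re]

lemma psd_tr_nonneg {n : Type} [Fintype n] [DecidableEq n] {A : Matrix n n ℂ}
    (hA : A.PosSemidef) : 0 ≤ A.trace.re := by
  exact (Complex.nonneg_iff.mp hA.trace_nonneg).1

lemma proj_tr_pos {n : Type} [Fintype n] [DecidableEq n] {Q : Matrix n n ℂ}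
    (hh : Q.IsHermitian) (hi : Q * Q = Q) (hne : Q ≠ 0) : 0 < Q.trace.re := by
  have hEq : Q = Qᴴ * Q := by rw [hh, hi]
  rw [hEq, aux_tr]
  obtain ⟨k, i, hki⟩ : ∃ k i, Q k i ≠ 0 := by
    by_contra h
    push_neg at h
    exact hne (by ext k i; simp [h k i])
  have : 0 < Complex.normSq (Q k i) := Complex.normSq_pos.mpr hki
  refine Finset.sum_pos' (fun _ _ => Finset.sum_nonneg fun _ _ => Complex.normSq_nonneg _) ?_
  exact ⟨i, Finset.mem_univ i, Finset.sum_pos' (fun _ _ => Complex.normSq_nonneg _)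
    ⟨k, Finset.mem_univ k, this⟩⟩

lemma prob_tr_nonneg {n : Type} [Fintype n] [DecidableEq n] {Q ρ : Matrix n n ℂ}
    (hh : Q.IsHermitian) (hi : Q * Q = Q) (hρ : ρ.PosSemidef) :
    0 ≤ ((Q * ρ).trace).re := by
  have h1 : (Q * ρ).trace = (Q * ρ * Qᴴ).trace := by
    rw [Matrix.trace_mul_cycle Q ρ Qᴴ, hh.eq, hi]
  rw [h1]
  exact psd_tr_nonneg (hρ.mul_mul_conjTranspose_same Q)

/-- if the coarse-graining `Q` is finer than `P`, then
`S_O(P)(ρ) ≥ S_O(Q)(ρ)` for every density matrix `ρ`. -/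

theorem obsEntropy_monotone {n : Type} [Fintype n] [DecidableEq n] {ι κ : Type}
    [Fintype ι] [Fintype κ]
    (P : ι → Matrix n n ℂ) (Q : κ → Matrix n n ℂ)
    (hP : IsCoarseGraining P) (hQ : IsCoarseGraining Q) (hF : Finer P Q)
    (ρ : Matrix n n ℂ) (hρ : IsDensityMatrix ρ) :
    obsEntropy P ρ ≥ obsEntropy Q ρ := by
  classical
  obtain ⟨hρpsd, -⟩ := hρ
  obtain ⟨hPh, hPi, hPne, hPo, hPs⟩ := hP
  obtain ⟨hQh, hQi, hQne, hQo, hQs⟩ := hQ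
  choose I hI using hF
  have hvolQ : ∀ j, 0 < vol Q j := fun j => proj_tr_pos (hQh j) (hQi j) (hQne j)
  have hprobQ : ∀ j, 0 ≤ prob Q ρ j := fun j => prob_tr_nonneg (hQh j) (hQi j) hρpsd
  have hprobsum : ∀ i, prob P ρ i = ∑ j ∈ I i, prob Q ρ j := by
    intro i
    simp only [prob, hI i, Finset.sum_mul, Matrix.trace_sum, Complex.re_sum]
  have hvolsum : ∀ i, vol P i = ∑ j ∈ I i, vol Q j := by
    intro i
    simp only [vol, hI i, Matrix.trace_sum, Complex.re_sum]
  have hmul : ∀ s t : Finset κ, (∑ j ∈ s, Q j) * (∑ j ∈ t, Q j) = ∑ j ∈ s ∩ t, Q j := by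
    intro s t
    rw [Finset.sum_mul_sum]
    have h1 : ∀ j ∈ s, ∑ j' ∈ t, Q j * Q j' = if j ∈ t then Q j else 0 := by
      intro j _
      have h2 : ∀ j' ∈ t, Q j * Q j' = if j = j' then Q j else 0 := by
        intro j' _
        by_cases h : j = j'
        · subst h; simp [hQi j]
        · simp [h, hQo j j' h]
      rw [Finset.sum_congr rfl h2, Finset.sum_ite_eq t j (fun _ => Q j)]
    rw [Finset.sum_congr rfl h1, Finset.sum_ite_mem]
  have hzero : ∀ s : Finset κ, (∑ j ∈ s, Q j) = 0 → s = ∅ := by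
    intro s hs
    by_contra h
    have htr : ∑ j ∈ s, vol Q j = 0 := by
      have h7 := congrArg (fun M : Matrix n n ℂ => M.trace.re) hs
      simpa [Matrix.trace_sum, Complex.re_sum, vol] using h7
    obtain ⟨j, hj⟩ := Finset.nonempty_of_ne_empty h
    have : 0 < ∑ j ∈ s, vol Q j :=
      Finset.sum_pos' (fun k _ => (hvolQ k).le) ⟨j, hj, hvolQ j⟩
    linarith
  have hdisj : ((Finset.univ : Finset ι) : Set ι).PairwiseDisjoint I := by
    intro i _ i' _ hne
    have h0 : (∑ j ∈ I i ∩ I i', Q j) = 0 := by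
      rw [← hmul, ← hI, ← hI]; exact hPo i i' hne
    exact Finset.disjoint_iff_inter_eq_empty.mpr (hzero _ h0)
  have hcov : Finset.univ.biUnion I = (Finset.univ : Finset κ) := by
    have hsum1 : ∑ j ∈ Finset.univ.biUnion I, Q j = 1 := by
      rw [Finset.sum_biUnion hdisj,
        show ∑ i, ∑ j ∈ I i, Q j = ∑ i, P i from
          Finset.sum_congr rfl fun i _ => (hI i).symm, hPs]
    have hsd : ∑ j ∈ (Finset.univ : Finset κ) \ Finset.univ.biUnion I, Q j = 0 := by
      have h6 := Finset.sum_sdiff (f := Q) (Finset.subset_univ (Finset.univ.biUnion I))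
      rw [hsum1, hQs] at h6
      exact add_right_cancel (h6.trans (zero_add 1).symm)
    exact Finset.Subset.antisymm (Finset.subset_univ _)
      (Finset.sdiff_eq_empty_iff_subset.mp (hzero _ hsd))
  unfold obsEntropy
  rw [ge_iff_le, neg_le_neg_iff]
  calc ∑ i, prob P ρ i * Real.log (prob P ρ i / vol P i)
      ≤ ∑ i, ∑ j ∈ I i, prob Q ρ j * Real.log (prob Q ρ j / vol Q j) := by
        refine Finset.sum_le_sum fun i _ => ?_
        rw [hprobsum i, hvolsum i]
        exact log_sum_ineq (I i) _ _ (fun j _ => hprobQ j) (fun j _ => hvolQ j)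
    _ = ∑ j, prob Q ρ j * Real.log (prob Q ρ j / vol Q j) := by
        rw [← Finset.sum_biUnion hdisj, hcov]
end

section
/- For any coarse-graining C and density matrix ρ on a finite-dimensional Hilbert space H, the observational entropy satisfies S(ρ) ≤ S_O(C)(ρ) ≤ ln dim H, where S(ρ) = -tr(ρ ln ρ) is the von Neumann entropy. -/
open scoped BigOperators ComplexOrder
open Matrix

/-- Von Neumann entropy `S(ρ) = -tr(ρ ln ρ)`, expressed via the eigenvalues of `ρ`. -/
noncomputable def vnEntropy {n : Type} [Fintype n] [DecidableEq n] {A : Matrix n n ℂ}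
    (hA : A.IsHermitian) : ℝ :=
  -∑ i, hA.eigenvalues i * Real.log (hA.eigenvalues i)

/-- The log-sum inequality: `(∑ x) log(∑x/∑y) ≤ ∑ x_j log(x_j/y_j)` for nonnegative
`x`, `y` with `y j = 0 → x j = 0`. -/
lemma log_sum_ineq_s2 {ι : Type*} [Fintype ι] (x y : ι → ℝ)
    (hx : ∀ j, 0 ≤ x j) (hy : ∀ j, 0 ≤ y j) (h0 : ∀ j, y j = 0 → x j = 0) :
    (∑ j, x j) * Real.log ((∑ j, x j) / (∑ j, y j)) ≤ ∑ j, x j * Real.log (x j / y j) := by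
  set X := ∑ j, x j with hX
  set Y := ∑ j, y j with hY
  have hXnn : (0 : ℝ) ≤ X := Finset.sum_nonneg fun j _ => hx j
  have hYnn : (0 : ℝ) ≤ Y := Finset.sum_nonneg fun j _ => hy j
  rcases eq_or_lt_of_le hXnn with hX0 | hX0
  · have hxj : ∀ j, x j = 0 := fun j =>
      (Finset.sum_eq_zero_iff_of_nonneg (fun j _ => hx j)).mp hX0.symm j (Finset.mem_univ j)
    rw [← hX0]
    simp [hxj]
  · have hY0 : (0 : ℝ) < Y := by
      rcases eq_or_lt_of_le hYnn with h | h
      · exfalso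
        have hyj := (Finset.sum_eq_zero_iff_of_nonneg (fun j _ => hy j)).mp h.symm
        have hX0' : X = 0 :=
          Finset.sum_eq_zero fun j _ => h0 j (hyj j (Finset.mem_univ j))
        rw [hX0'] at hX0; exact lt_irrefl 0 hX0
      · exact h
    have key : ∀ j, x j - y j * (X / Y) ≤
        x j * Real.log (x j / y j) - x j * Real.log (X / Y) := by
      intro j
      rcases eq_or_lt_of_le (hx j) with h | h
      · rw [← h]
        simp only [zero_mul, sub_zero, zero_sub, sub_self]
        have : 0 ≤ y j * (X / Y) := mul_nonneg (hy j) (div_nonneg hXnn hYnn)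
        linarith
      · have hyj : 0 < y j := (hy j).lt_of_ne fun e => by
          have := h0 j e.symm; rw [this] at h; exact lt_irrefl 0 h
        have ht : 0 < (X / Y) / (x j / y j) := div_pos (div_pos hX0 hY0) (div_pos h hyj)
        have h1 : Real.log ((X / Y) / (x j / y j)) =
            Real.log (X / Y) - Real.log (x j / y j) :=
          Real.log_div (div_pos hX0 hY0).ne' (div_pos h hyj).ne'
        have h3 : x j * Real.log ((X / Y) / (x j / y j)) ≤
            x j * ((X / Y) / (x j / y j) - 1) :=
          mul_le_mul_of_nonneg_left (Real.log_le_sub_one_of_pos ht) (hx j)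
        have h4 : x j * ((X / Y) / (x j / y j) - 1) = y j * (X / Y) - x j := by
          field_simp
        rw [h1, h4] at h3
        have h5 := mul_sub (x j) (Real.log (X / Y)) (Real.log (x j / y j))
        linarith
    have hsum := Finset.sum_le_sum (fun j (_ : j ∈ Finset.univ) => key j)
    rw [Finset.sum_sub_distrib, Finset.sum_sub_distrib, ← Finset.sum_mul, ← Finset.sum_mul,
      ← hX, ← hY] at hsum
    have h6 : Y * (X / Y) = X := by field_simp
    linarith

/-- for any coarse-graining `C` and density matrix `ρ`,
`S(ρ) ≤ S_O(C)(ρ) ≤ ln dim H`. -/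
theorem obsEntropy_bounded {n : Type} [Fintype n] [DecidableEq n] {ι : Type} [Fintype ι]
    (P : ι → Matrix n n ℂ) (ρ : Matrix n n ℂ)
    (hP : IsCoarseGraining P) (hρ : IsDensityMatrix ρ) :
    vnEntropy hρ.1.1 ≤ obsEntropy P ρ ∧ obsEntropy P ρ ≤ Real.log (Fintype.card n) := by
  classical
  obtain ⟨hherm, hidem, -, -, hsum1⟩ := hP
  set U : Matrix n n ℂ := (hρ.1.1.eigenvectorUnitary : Matrix n n ℂ) with hUdef
  set ev : n → ℝ := hρ.1.1.eigenvalues with hev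
  have hUU : star U * U = 1 := Unitary.coe_star_mul_self hρ.1.1.eigenvectorUnitary
  have hUU' : U * star U = 1 := Unitary.coe_mul_star_self hρ.1.1.eigenvectorUnitary
  have hspec : ρ = U * diagonal (Complex.ofReal ∘ ev) * star U := hρ.1.1.spectral_theorem
  have hMpsd : ∀ i, (star U * P i * U).PosSemidef := by
    intro i
    have h1 : (P i).PosSemidef := by
      have h := posSemidef_conjTranspose_mul_self (P i)
      rwa [(hherm i).eq, hidem i] at h
    exact h1.conjTranspose_mul_mul_same U
  have hdiag : ∀ i j, 0 ≤ (star U * P i * U) j j := by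
    intro i j
    have h := (hMpsd i).dotProduct_mulVec_nonneg (Pi.single j 1)
    simpa [dotProduct, Pi.single_apply, mulVec] using h
  set a : ι → n → ℝ := fun i j => ((star U * P i * U) j j).re with ha
  have hanon : ∀ i j, 0 ≤ a i j := fun i j => (Complex.nonneg_iff.mp (hdiag i j)).1
  have haeq : ∀ i j, (star U * P i * U) j j = (a i j : ℂ) := by
    intro i j
    have h := Complex.nonneg_iff.mp (hdiag i j)
    apply Complex.ext
    · simp [ha]
    · simp [ha, ← h.2]
  have hacol : ∀ j, ∑ i, a i j = 1 := by
    intro j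
    have h1 : ∑ i, star U * P i * U = 1 := by
      rw [← Finset.sum_mul, ← Finset.mul_sum, hsum1, mul_one, hUU]
    have h2 : ∑ i, (star U * P i * U) j j = 1 := by
      rw [← Matrix.sum_apply j j Finset.univ _, h1, Matrix.one_apply_eq]
    rw [Finset.sum_congr rfl (fun i _ => haeq i j)] at h2
    exact_mod_cast h2
  have hevnon : ∀ j, 0 ≤ ev j := fun j => hρ.1.eigenvalues_nonneg j
  have hevsum : ∑ j, ev j = 1 := by
    have h1 : ρ.trace = ∑ j, (ev j : ℂ) := by
      rw [hspec, Matrix.trace_mul_cycle, hUU, Matrix.one_mul, Matrix.trace_diagonal]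
      rfl
    rw [hρ.2] at h1
    exact_mod_cast h1.symm
  have hprob : ∀ i, prob P ρ i = ∑ j, a i j * ev j := by
    intro i
    have h1 : (P i * ρ).trace = ∑ j, (a i j : ℂ) * (ev j : ℂ) := by
      rw [hspec, ← Matrix.mul_assoc, ← Matrix.mul_assoc,
        Matrix.trace_mul_cycle (P i * U) (diagonal (Complex.ofReal ∘ ev)) (star U),
        ← Matrix.mul_assoc]
      rw [Matrix.trace]
      simp only [Matrix.diag, Matrix.mul_diagonal]
      exact Finset.sum_congr rfl fun j _ => by rw [haeq i j]; rfl
    rw [prob, h1]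
    simp
  have hvol : ∀ i, vol P i = ∑ j, a i j := by
    intro i
    have h1 : (star U * P i * U).trace = (P i).trace := by
      rw [Matrix.trace_mul_cycle, hUU', Matrix.one_mul]
    have h2 : (P i).trace = ∑ j, (a i j : ℂ) := by
      rw [← h1, Matrix.trace]
      exact Finset.sum_congr rfl fun j _ => haeq i j
    rw [vol, h2]
    simp
  constructor
  · -- lower bound: vnEntropy ≤ obsEntropy
    have key : ∀ i, prob P ρ i * Real.log (prob P ρ i / vol P i)
        ≤ ∑ j, a i j * ev j * Real.log (ev j) := by
      intro i
      have h : (∑ j, a i j * ev j) * Real.log ((∑ j, a i j * ev j) / (∑ j, a i j)) ≤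
          ∑ j, (a i j * ev j) * Real.log ((a i j * ev j) / (a i j)) :=
        log_sum_ineq_s2 (fun j => a i j * ev j) (fun j => a i j)
          (fun j => mul_nonneg (hanon i j) (hevnon j)) (hanon i)
          (fun j hj => by show a i j * ev j = 0; rw [show a i j = 0 from hj, zero_mul])
      rw [← hprob i, ← hvol i] at h
      refine h.trans (le_of_eq (Finset.sum_congr rfl fun j _ => ?_))
      rcases eq_or_ne (a i j) 0 with h' | h'
      · simp [h']
      · have : (a i j * ev j) / (a i j) = ev j := by
          rw [mul_comm, mul_div_assoc, div_self h', mul_one]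
        rw [this]
    have hsumkey := Finset.sum_le_sum (fun i (_ : i ∈ Finset.univ) => key i)
    have hswap : ∑ i, ∑ j, a i j * ev j * Real.log (ev j)
        = ∑ j, ev j * Real.log (ev j) := by
      rw [Finset.sum_comm]
      refine Finset.sum_congr rfl fun j _ => ?_
      simp_rw [mul_assoc]
      rw [← Finset.sum_mul, hacol j, one_mul]
    rw [hswap] at hsumkey
    show -∑ j, ev j * Real.log (ev j) ≤
      -∑ i, prob P ρ i * Real.log (prob P ρ i / vol P i)
    linarith
  · -- upper bound: obsEntropy ≤ log (card n)
    have hpnon : ∀ i, 0 ≤ prob P ρ i := fun i => by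
      rw [hprob i]; exact Finset.sum_nonneg fun j _ => mul_nonneg (hanon i j) (hevnon j)
    have hvnon : ∀ i, 0 ≤ vol P i := fun i => by
      rw [hvol i]; exact Finset.sum_nonneg fun j _ => hanon i j
    have h0 : ∀ i, vol P i = 0 → prob P ρ i = 0 := by
      intro i hv
      rw [hvol i] at hv
      have hz : ∀ j, a i j = 0 := fun j =>
        (Finset.sum_eq_zero_iff_of_nonneg (fun j _ => hanon i j)).mp hv j (Finset.mem_univ j)
      rw [hprob i]
      exact Finset.sum_eq_zero fun j _ => by rw [hz j, zero_mul]
    have key := log_sum_ineq_s2 (prob P ρ) (vol P) hpnon hvnon h0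
    have hpsum : ∑ i, prob P ρ i = 1 := by
      simp only [hprob]
      rw [Finset.sum_comm]
      calc ∑ j, ∑ i, a i j * ev j = ∑ j, ev j := by
            refine Finset.sum_congr rfl fun j _ => ?_
            rw [← Finset.sum_mul, hacol j, one_mul]
        _ = 1 := hevsum
    have hvsum : ∑ i, vol P i = (Fintype.card n : ℝ) := by
      simp only [hvol]
      rw [Finset.sum_comm]
      calc ∑ j : n, ∑ i, a i j = ∑ j : n, (1 : ℝ) :=
            Finset.sum_congr rfl fun j _ => hacol j
        _ = (Fintype.card n : ℝ) := by simp [Finset.card_univ]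
    rw [hpsum, hvsum, one_mul, one_div, Real.log_inv] at key
    show -∑ i, prob P ρ i * Real.log (prob P ρ i / vol P i) ≤ Real.log (Fintype.card n)
    linarith
end

section
/- The observational entropy S_O(C)(ρ) equals ln dim H if and only if for every i, p_i = tr(P_i)/dim H. -/
open scoped BigOperators ComplexOrder
open Matrix

section Aux
variable {n : Type} [Fintype n] [DecidableEq n] {ι : Type} [Fintype ι]

lemma psd_trace_re_nonneg {A : Matrix n n ℂ} (hA : A.PosSemidef) : 0 ≤ A.trace.re := by
  rw [Matrix.trace, Complex.re_sum]
  apply Finset.sum_nonneg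
  intro i _
  have h : (0 : ℂ) ≤ A i i := hA.diag_nonneg
  exact (Complex.le_def.mp h).1

lemma gibbs_term {p q : ℝ} (hp : 0 ≤ p) (hq : 0 < q) : p - q ≤ p * Real.log (p / q) := by
  rcases eq_or_lt_of_le hp with h | h
  · simp [← h]; linarith
  · have h1 : Real.log (q / p) ≤ q / p - 1 := Real.log_le_sub_one_of_pos (div_pos hq h)
    have h2 : Real.log (q / p) = - Real.log (p / q) := by
      rw [← Real.log_inv]; congr 1; field_simp
    have h3 : p * (q / p) = q := by field_simp
    nlinarith

lemma gibbs_term_eq {p q : ℝ} (hp : 0 ≤ p) (hq : 0 < q)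
    (h : p * Real.log (p / q) = p - q) : p = q := by
  by_contra hne
  rcases eq_or_lt_of_le hp with h0 | h0
  · rw [← h0] at h; simp at h; linarith
  · have hx : q / p ≠ 1 := by
      intro he; exact hne ((div_eq_one_iff_eq h0.ne').mp he).symm
    have h1 : Real.log (q / p) < q / p - 1 := Real.log_lt_sub_one_of_pos (div_pos hq h0) hx
    have h2 : Real.log (q / p) = - Real.log (p / q) := by
      rw [← Real.log_inv]; congr 1; field_simp
    have h3 : p * (q / p) = q := by field_simp
    nlinarith

end Aux

section Facts
variable {n : Type} [Fintype n] [DecidableEq n] {ι : Type} [Fintype ι]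
  {P : ι → Matrix n n ℂ} {ρ : Matrix n n ℂ}

lemma prob_nonneg (hP : IsCoarseGraining P) (hρ : IsDensityMatrix ρ) (i : ι) :
    0 ≤ prob P ρ i := by
  have key : (P i * ρ).trace = (P i * ρ * (P i)ᴴ).trace := by
    rw [(hP.1 i).eq, Matrix.trace_mul_cycle, hP.2.1 i]
  unfold prob
  rw [key]
  exact psd_trace_re_nonneg (hρ.1.mul_mul_conjTranspose_same (P i))

lemma vol_pos (hP : IsCoarseGraining P) (i : ι) : 0 < vol P i := by
  have key : (P i).trace = ((P i)ᴴ * (P i)).trace := by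
    conv_lhs => rw [← hP.2.1 i]
    rw [(hP.1 i).eq]
  have hre : ((P i)ᴴ * (P i)).trace.re = ∑ j, ∑ k, Complex.normSq (P i k j) := by
    rw [Matrix.trace, Complex.re_sum]
    congr 1; ext j
    simp only [Matrix.diag_apply, Matrix.mul_apply, Matrix.conjTranspose_apply, Complex.re_sum]
    congr 1; ext k
    simp [Complex.normSq_apply, Complex.mul_re]
  unfold vol
  rw [key, hre]
  have hnn : ∀ j ∈ Finset.univ, (0:ℝ) ≤ ∑ k, Complex.normSq (P i k j) := fun j _ =>
    Finset.sum_nonneg fun k _ => Complex.normSq_nonneg _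
  rcases lt_or_eq_of_le (Finset.sum_nonneg hnn) with h | h
  · exact h
  · exfalso
    apply hP.2.2.1 i
    ext k j
    have h1 := (Finset.sum_eq_zero_iff_of_nonneg hnn).mp h.symm j (Finset.mem_univ j)
    have h2 := (Finset.sum_eq_zero_iff_of_nonneg
      (fun k _ => Complex.normSq_nonneg (P i k j))).mp h1 k (Finset.mem_univ k)
    simpa using Complex.normSq_eq_zero.mp h2

lemma sum_prob (hP : IsCoarseGraining P) (hρ : IsDensityMatrix ρ) :
    ∑ i, prob P ρ i = 1 := by
  unfold prob
  rw [← Complex.re_sum, ← Matrix.trace_sum, ← Finset.sum_mul, hP.2.2.2.2, Matrix.one_mul,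
    hρ.2]
  simp

lemma sum_vol (hP : IsCoarseGraining P) :
    ∑ i, vol P i = Fintype.card n := by
  unfold vol
  rw [← Complex.re_sum, ← Matrix.trace_sum, hP.2.2.2.2, Matrix.trace_one]
  simp

end Facts

/-- `S_O(C)(ρ) = ln dim H` if and only if `p_i = tr(P_i)/dim H` for every `i`. -/
theorem obsEntropy_eq_max_iff {n : Type} [Fintype n] [DecidableEq n] {ι : Type} [Fintype ι]
    (P : ι → Matrix n n ℂ) (ρ : Matrix n n ℂ)
    (hP : IsCoarseGraining P) (hρ : IsDensityMatrix ρ) :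
    obsEntropy P ρ = Real.log (Fintype.card n) ↔
      ∀ i, prob P ρ i = vol P i / (Fintype.card n) := by
  unfold obsEntropy
  rcases isEmpty_or_nonempty n with hn | hn
  · haveI : IsEmpty ι := ⟨fun i => hP.2.2.1 i (Subsingleton.elim _ _)⟩
    simp [Fintype.card_eq_zero]
  · set d : ℝ := (Fintype.card n : ℝ) with hd
    have hdpos : (0:ℝ) < d := by
      rw [hd]; exact_mod_cast Fintype.card_pos
    set q : ι → ℝ := fun i => vol P i / d with hq
    have hqpos : ∀ i, 0 < q i := fun i => div_pos (vol_pos hP i) hdpos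
    have hsumq : ∑ i, q i = 1 := by
      rw [hq]; rw [← Finset.sum_div, sum_vol hP, ← hd, div_self hdpos.ne']
    have hpnn : ∀ i, 0 ≤ prob P ρ i := prob_nonneg hP hρ
    have hsump := sum_prob hP hρ
    have key : ∀ i, prob P ρ i * Real.log (prob P ρ i / vol P i)
        = prob P ρ i * Real.log (prob P ρ i / q i) - prob P ρ i * Real.log d := by
      intro i
      rcases eq_or_lt_of_le (hpnn i) with h0 | h0
      · simp [← h0]
      · have hv := (vol_pos hP i).ne'
        have hstep : prob P ρ i / vol P i = (prob P ρ i / q i) / d := by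
          rw [hq]; field_simp
        rw [hstep, Real.log_div (by positivity) hdpos.ne', mul_sub]
    have hobs : -∑ i, prob P ρ i * Real.log (prob P ρ i / vol P i)
        = Real.log d - ∑ i, prob P ρ i * Real.log (prob P ρ i / q i) := by
      rw [Finset.sum_congr rfl (fun i _ => key i), Finset.sum_sub_distrib,
        ← Finset.sum_mul, hsump]
      ring
    rw [hobs]
    constructor
    · intro h
      have hD : ∑ i, prob P ρ i * Real.log (prob P ρ i / q i) = 0 := by linarith
      have hterm : ∀ i ∈ Finset.univ,
          (0:ℝ) ≤ prob P ρ i * Real.log (prob P ρ i / q i) - (prob P ρ i - q i) :=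
        fun i _ => sub_nonneg.mpr (gibbs_term (hpnn i) (hqpos i))
      have hsum0 : ∑ i, (prob P ρ i * Real.log (prob P ρ i / q i) - (prob P ρ i - q i)) = 0 := by
        rw [Finset.sum_sub_distrib, hD, Finset.sum_sub_distrib, hsump, hsumq]; ring
      intro i
      have h1 := (Finset.sum_eq_zero_iff_of_nonneg hterm).mp hsum0 i (Finset.mem_univ i)
      simp only [hq] at h1
      exact gibbs_term_eq (hpnn i) (div_pos (vol_pos hP i) hdpos) (by linarith)
    · intro h
      have hz : ∀ i, prob P ρ i * Real.log (prob P ρ i / q i) = 0 := by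
        intro i
        have : prob P ρ i = q i := h i
        rw [this, div_self (hqpos i).ne', Real.log_one, mul_zero]
      rw [Finset.sum_congr rfl (fun i _ => hz i), Finset.sum_const_zero]
      ring
end

section
/- If the coarse-graining contains the spectral projectors of the density matrix, i.e., C_ρ is rougher than C (written C_ρ ↪ C), then S_O(C)(ρ) = S(ρ); conversely, equality S_O(C)(ρ) = S(ρ) implies C_ρ ↪ C. -/
open scoped BigOperators ComplexOrder
open Matrix

/-- `(Q, lam)` is the spectral decomposition of `ρ` over distinct eigenvalues:
the `Q k` form a coarse-graining, the eigenvalues `lam` are pairwise distinct,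
and `ρ = ∑ k, lam k • Q k`. -/
def IsSpectralDecomp {n : Type} [Fintype n] [DecidableEq n] {κ : Type} [Fintype κ]
    (ρ : Matrix n n ℂ) (Q : κ → Matrix n n ℂ) (lam : κ → ℝ) : Prop :=
  IsCoarseGraining Q ∧ Function.Injective lam ∧ ρ = ∑ k, (lam k : ℂ) • Q k

set_option linter.unusedSectionVars false
set_option maxHeartbeats 1000000

section Helpers

section Helpers

variable {n : Type} [Fintype n] [DecidableEq n]

lemma trace_hmul_re (M : Matrix n n ℂ) :
    ((Mᴴ * M).trace).re = ∑ j, ∑ i, Complex.normSq (M i j) := by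
  rw [Matrix.trace, Complex.re_sum]
  refine Finset.sum_congr rfl fun j _ => ?_
  rw [Matrix.diag_apply, Matrix.mul_apply, Complex.re_sum]
  refine Finset.sum_congr rfl fun i _ => ?_
  rw [Matrix.conjTranspose_apply, Complex.star_def, Complex.normSq_apply, Complex.mul_re]
  simp [Complex.conj_re, Complex.conj_im]

lemma trace_hmul_re_nonneg (M : Matrix n n ℂ) : 0 ≤ ((Mᴴ * M).trace).re := by
  rw [trace_hmul_re]
  exact Finset.sum_nonneg fun j _ => Finset.sum_nonneg fun i _ => Complex.normSq_nonneg _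

lemma eq_zero_of_trace_hmul_re (M : Matrix n n ℂ) (h : ((Mᴴ * M).trace).re = 0) : M = 0 := by
  rw [trace_hmul_re] at h
  ext i j
  have h1 : ∀ j' ∈ Finset.univ, (0:ℝ) ≤ ∑ i', Complex.normSq (M i' j') :=
    fun j' _ => Finset.sum_nonneg fun i' _ => Complex.normSq_nonneg _
  have h2 := (Finset.sum_eq_zero_iff_of_nonneg h1).mp h j (Finset.mem_univ j)
  have h3 := (Finset.sum_eq_zero_iff_of_nonneg
    (fun i' _ => Complex.normSq_nonneg (M i' j))).mp h2 i (Finset.mem_univ i)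
  simpa using Complex.normSq_eq_zero.mp h3

lemma trace_proj_mul (A B : Matrix n n ℂ) (hA : A.IsHermitian) (hB : B.IsHermitian)
    (hA2 : A * A = A) (hB2 : B * B = B) :
    (A * B).trace = (((B * A)ᴴ) * (B * A)).trace := by
  have h1 : (B * A)ᴴ = A * B := by rw [conjTranspose_mul, hA.eq, hB.eq]
  rw [h1]
  have e1 : A * B * (B * A) = A * B * A := by
    rw [← mul_assoc (A*B) B A, mul_assoc A B B, hB2]
  rw [e1, trace_mul_cycle A B A, hA2]



lemma gibbs_ineq {m x : ℝ} (hm : 0 < m) (hx : 0 ≤ x) :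
    x - m ≤ x * Real.log x - x * Real.log m := by
  rcases hx.eq_or_lt with h | h
  · simp [← h]; linarith
  · have hlog : Real.log (m / x) ≤ m / x - 1 := Real.log_le_sub_one_of_pos (by positivity)
    rw [Real.log_div hm.ne' h.ne'] at hlog
    have := mul_le_mul_of_nonneg_left hlog h.le
    have hx' : x * (m / x - 1) = m - x := by field_simp
    nlinarith

lemma gibbs_eq {m x : ℝ} (hm : 0 < m) (hx : 0 ≤ x)
    (heq : x * Real.log x - x * Real.log m = x - m) : x = m := by
  rcases hx.eq_or_lt with h | h
  · exfalso; rw [← h] at heq; simp at heq; linarith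
  · by_contra hne
    have hne' : m / x ≠ 1 := by
      intro hc; apply hne; field_simp at hc; linarith
    have hlog : Real.log (m / x) < m / x - 1 := Real.log_lt_sub_one_of_pos (by positivity) hne'
    rw [Real.log_div hm.ne' h.ne'] at hlog
    have := mul_lt_mul_of_pos_left hlog h
    have hx' : x * (m / x - 1) = m - x := by field_simp
    nlinarith

/-- Jensen/Gibbs gap for `x ↦ x log x`, with the equality case. -/
lemma jensen_step {κ : Type} [Fintype κ] (c : κ → ℝ) (lam : κ → ℝ)
    (hc : ∀ k, 0 ≤ c k) (hlam : ∀ k, 0 ≤ lam k) (hinj : Function.Injective lam)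
    (hVpos : 0 < ∑ k, c k) :
    ((∑ k, c k * lam k) * Real.log ((∑ k, c k * lam k) / (∑ k, c k))
        ≤ ∑ k, c k * (lam k * Real.log (lam k))) ∧
    (∑ k, c k * (lam k * Real.log (lam k))
        = (∑ k, c k * lam k) * Real.log ((∑ k, c k * lam k) / (∑ k, c k))
      → ∃ k₀, ∀ k, k ≠ k₀ → c k = 0) := by
  classical
  set V := ∑ k, c k with hV
  set p := ∑ k, c k * lam k with hp
  have hppos : 0 ≤ p := Finset.sum_nonneg fun k _ => mul_nonneg (hc k) (hlam k)
  rcases hppos.eq_or_lt with hp0 | hp0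
  · -- p = 0 case
    have hterm : ∀ k ∈ Finset.univ, c k * lam k = 0 :=
      (Finset.sum_eq_zero_iff_of_nonneg
        (fun k _ => mul_nonneg (hc k) (hlam k))).mp hp0.symm
    have hzero : ∀ k, c k * (lam k * Real.log (lam k)) = 0 := by
      intro k
      have := hterm k (Finset.mem_univ k)
      rcases mul_eq_zero.mp this with h | h
      · rw [h, zero_mul]
      · rw [h]; simp
    have hsum0 : ∑ k, c k * (lam k * Real.log (lam k)) = 0 :=
      Finset.sum_eq_zero fun k _ => hzero k
    constructor
    · rw [hsum0, ← hp0]; simp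
    · intro _
      by_cases hex : ∃ k₀, lam k₀ = 0
      · obtain ⟨k₀, hk₀⟩ := hex
        refine ⟨k₀, fun k hk => ?_⟩
        have := hterm k (Finset.mem_univ k)
        rcases mul_eq_zero.mp this with h | h
        · exact h
        · exact absurd (hinj (h.trans hk₀.symm)) hk
      · exfalso
        push_neg at hex
        have : ∀ k ∈ Finset.univ, c k = 0 := by
          intro k _
          have := hterm k (Finset.mem_univ k)
          rcases mul_eq_zero.mp this with h | h
          · exact h
          · exact absurd h (hex k)
        rw [hV] at hVpos
        rw [Finset.sum_eq_zero this] at hVpos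
        exact lt_irrefl _ hVpos
  · -- p > 0 case
    set m := p / V with hm
    have hmpos : 0 < m := div_pos hp0 hVpos
    have hterm : ∀ k, c k * (lam k - m) ≤ c k * (lam k * Real.log (lam k) - lam k * Real.log m) :=
      fun k => mul_le_mul_of_nonneg_left (gibbs_ineq hmpos (hlam k)) (hc k)
    have hsum := Finset.sum_le_sum (fun k (_ : k ∈ Finset.univ) => hterm k)
    have hL : ∑ k, c k * (lam k - m) = 0 := by
      have : ∀ k, c k * (lam k - m) = c k * lam k - (c k) * m := fun k => by ring
      simp only [this, Finset.sum_sub_distrib, ← Finset.sum_mul, ← hp, ← hV]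
      rw [hm]; field_simp; ring
    have hR : ∑ k, c k * (lam k * Real.log (lam k) - lam k * Real.log m)
        = (∑ k, c k * (lam k * Real.log (lam k))) - p * Real.log m := by
      have : ∀ k, c k * (lam k * Real.log (lam k) - lam k * Real.log m)
          = c k * (lam k * Real.log (lam k)) - (c k * lam k) * Real.log m := fun k => by ring
      simp only [this, Finset.sum_sub_distrib, ← Finset.sum_mul, ← hp]
    rw [hL, hR] at hsum
    constructor
    · linarith
    · intro heq
      -- each term equality
      have hsum0 : ∑ k, (c k * (lam k * Real.log (lam k) - lam k * Real.log m)
          - c k * (lam k - m)) = 0 := by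
        rw [Finset.sum_sub_distrib, hL, hR, heq]
        ring
      have hnn : ∀ k ∈ Finset.univ, 0 ≤ c k * (lam k * Real.log (lam k) - lam k * Real.log m)
          - c k * (lam k - m) := fun k _ => sub_nonneg.mpr (hterm k)
      have hzero := (Finset.sum_eq_zero_iff_of_nonneg hnn).mp hsum0
      have hVex : ∃ k₀, c k₀ ≠ 0 := by
        by_contra hall
        push_neg at hall
        rw [hV, Finset.sum_eq_zero (fun k _ => hall k)] at hVpos
        exact lt_irrefl _ hVpos
      obtain ⟨k₀, hk₀⟩ := hVex
      have hlameq : ∀ k, c k ≠ 0 → lam k = m := by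
        intro k hck
        have h0 := hzero k (Finset.mem_univ k)
        have : c k * (lam k * Real.log (lam k) - lam k * Real.log m) = c k * (lam k - m) := by
          linarith [sub_eq_zero.mp h0]
        have hckpos : 0 < c k := lt_of_le_of_ne (hc k) (Ne.symm hck)
        have := mul_left_cancel₀ hck this
        exact gibbs_eq hmpos (hlam k) this
      refine ⟨k₀, fun k hk => ?_⟩
      by_contra hck
      exact hk (hinj ((hlameq k hck).trans (hlameq k₀ hk₀).symm))

/-- The converse: concentration implies equality. -/
lemma jensen_step_eq {κ : Type} [Fintype κ] (c : κ → ℝ) (lam : κ → ℝ)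
    (k₀ : κ) (hconc : ∀ k, k ≠ k₀ → c k = 0) :
    ∑ k, c k * (lam k * Real.log (lam k))
      = (∑ k, c k * lam k) * Real.log ((∑ k, c k * lam k) / (∑ k, c k)) := by
  classical
  have hV : ∑ k, c k = c k₀ := Finset.sum_eq_single k₀ (fun k _ hk => hconc k hk) (by simp)
  have hp : ∑ k, c k * lam k = c k₀ * lam k₀ :=
    Finset.sum_eq_single k₀ (fun k _ hk => by rw [hconc k hk, zero_mul]) (by simp)
  have hs : ∑ k, c k * (lam k * Real.log (lam k)) = c k₀ * (lam k₀ * Real.log (lam k₀)) :=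
    Finset.sum_eq_single k₀ (fun k _ hk => by rw [hconc k hk, zero_mul]) (by simp)
  rw [hV, hp, hs]
  by_cases hc : c k₀ = 0
  · simp [hc]
  · have h1 : c k₀ * lam k₀ / c k₀ = lam k₀ := by field_simp
    rw [h1]; ring

lemma spectral_match {n : Type} [Fintype n] [DecidableEq n] {κ : Type} [Fintype κ]
    {ρ : Matrix n n ℂ} {Q : κ → Matrix n n ℂ} {lam : κ → ℝ}
    (hH : ρ.IsHermitian)
    (hQh : ∀ k, (Q k).IsHermitian) (hQ2 : ∀ k, Q k * Q k = Q k) (hQne : ∀ k, Q k ≠ 0)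
    (hQorth : ∀ k l, k ≠ l → Q k * Q l = 0) (hQsum : ∑ k, Q k = 1)
    (hinj : Function.Injective lam) (hrep : ρ = ∑ k, (lam k : ℂ) • Q k) :
    (∀ k, ∃ i, hH.eigenvalues i = lam k) ∧
    (∀ f : ℝ → ℝ, ∑ i, f (hH.eigenvalues i) = ∑ k, ((Q k).trace.re) * f (lam k)) := by
  classical
  set μ : n → ℝ := hH.eigenvalues with hμdef
  set U : Matrix n n ℂ := (hH.eigenvectorUnitary : Matrix n n ℂ) with hUdef
  have hUU : U * star U = 1 := mem_unitaryGroup_iff.mp hH.eigenvectorUnitary.2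
  have hU'U : star U * U = 1 := mem_unitaryGroup_iff'.mp hH.eigenvectorUnitary.2
  have hρdiag : ρ = U * diagonal (fun i => (μ i : ℂ)) * star U := by
    have := hH.spectral_theorem
    rw [Unitary.conjStarAlgAut_apply] at this
    exact this
  -- product of two conjugated diagonals
  have hmul : ∀ d e : n → ℂ, (U * diagonal d * star U) * (U * diagonal e * star U)
      = U * diagonal (fun i => d i * e i) * star U := by
    intro d e
    simp only [mul_assoc]
    rw [← mul_assoc (star U) U, hU'U, one_mul, ← mul_assoc (diagonal d) (diagonal e),
      diagonal_mul_diagonal]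
  have hsmul : ∀ (z : ℂ) (d : n → ℂ), z • (U * diagonal d * star U)
      = U * diagonal (fun i => z * d i) * star U := by
    intro z d
    rw [← smul_mul_assoc, ← mul_smul_comm, ← diagonal_smul]
    rfl
  set D : ℝ → Matrix n n ℂ := fun t => U * diagonal (fun i => if μ i = t then 1 else 0) * star U
    with hDdef
  set T : Finset ℝ := Finset.univ.image μ with hTdef
  have hdiagstar : ∀ t, star (diagonal (fun i => if μ i = t then (1:ℂ) else 0))
      = diagonal (fun i => if μ i = t then (1:ℂ) else 0) := by
    intro t
    have hfun0 : (star fun i => if μ i = t then (1:ℂ) else 0)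
        = (fun i => if μ i = t then (1:ℂ) else 0) := by
      funext i
      by_cases h : μ i = t <;> simp [h, Pi.star_apply]
    rw [Matrix.star_eq_conjTranspose, diagonal_conjTranspose, hfun0]
  have hDherm : ∀ t, (D t)ᴴ = D t := by
    intro t
    rw [hDdef, ← Matrix.star_eq_conjTranspose]
    simp only [StarMul.star_mul, star_star, hdiagstar, mul_assoc]
  have hfun1 : ∀ t : ℝ, (fun i => (μ i : ℂ) * (if μ i = t then 1 else 0))
      = (fun i => (t : ℂ) * (if μ i = t then 1 else 0)) := by
    intro t
    funext i
    by_cases h : μ i = t <;> simp [h]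
  have hρD : ∀ t, ρ * D t = (t : ℂ) • D t := by
    intro t
    rw [hρdiag]
    simp only [hDdef]
    rw [hmul, hsmul, hfun1]
  have hfun2 : ∀ t : ℝ, (fun i => (if μ i = t then (1:ℂ) else 0) * (μ i : ℂ))
      = (fun i => (t : ℂ) * (if μ i = t then 1 else 0)) := by
    intro t
    funext i
    by_cases h : μ i = t <;> simp [h]
  have hDρ : ∀ t, D t * ρ = (t : ℂ) • D t := by
    intro t
    rw [hρdiag]
    simp only [hDdef]
    rw [hmul, hsmul, hfun2]
  have hsumD : ∑ t ∈ T, D t = 1 := by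
    rw [hDdef]
    have h1 : ∑ t ∈ T, U * diagonal (fun i => if μ i = t then (1:ℂ) else 0) * star U
        = U * (∑ t ∈ T, diagonal (fun i => if μ i = t then (1:ℂ) else 0)) * star U := by
      rw [Finset.mul_sum, Finset.sum_mul]
    rw [h1]
    have h2 : (∑ t ∈ T, diagonal (fun i => if μ i = t then (1:ℂ) else 0))
        = diagonal (fun i => ∑ t ∈ T, if μ i = t then (1:ℂ) else 0) := by
      ext i j
      by_cases hij : i = j
      · subst hij
        simp [Matrix.sum_apply, Matrix.diagonal_apply_eq]
      · simp [Matrix.sum_apply, Matrix.diagonal_apply_ne _ hij]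
    rw [h2]
    have h3 : (fun i => ∑ t ∈ T, if μ i = t then (1:ℂ) else 0) = fun _ => (1:ℂ) := by
      funext i
      rw [Finset.sum_ite_eq T (μ i) (fun _ => (1:ℂ))]
      simp [hTdef]
    rw [h3, diagonal_one, mul_one, hUU]
  have htrD : ∀ t, (D t).trace = ((Finset.univ.filter (fun i => μ i = t)).card : ℂ) := by
    intro t
    rw [hDdef]
    rw [trace_mul_cycle, hU'U, one_mul, trace_diagonal]
    rw [Finset.sum_boole]
  have hQρ : ∀ k, Q k * ρ = (lam k : ℂ) • Q k := by
    intro k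
    rw [hrep, Finset.mul_sum]
    rw [Finset.sum_eq_single k (fun l _ hl => by
      rw [mul_smul_comm, hQorth k l (Ne.symm hl), smul_zero]) (by simp)]
    rw [mul_smul_comm, hQ2]
  have hρQ : ∀ k, ρ * Q k = (lam k : ℂ) • Q k := by
    intro k
    rw [hrep, Finset.sum_mul]
    rw [Finset.sum_eq_single k (fun l _ hl => by
      rw [smul_mul_assoc, hQorth l k hl, smul_zero]) (by simp)]
    rw [smul_mul_assoc, hQ2]
  have hQD0 : ∀ k t, lam k ≠ t → Q k * D t = 0 := by
    intro k t hne
    have h1 : Q k * (ρ * D t) = (t : ℂ) • (Q k * D t) := by rw [hρD, mul_smul_comm]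
    have h2 : Q k * ρ * D t = (lam k : ℂ) • (Q k * D t) := by rw [hQρ, smul_mul_assoc]
    have h3 : ((t : ℂ) - (lam k : ℂ)) • (Q k * D t) = 0 := by
      rw [sub_smul, ← h1, ← h2, mul_assoc, sub_self]
    rcases smul_eq_zero.mp h3 with h | h
    · exact absurd (Complex.ofReal_injective (sub_eq_zero.mp h).symm) hne
    · exact h
  have hDQ0 : ∀ t k, lam k ≠ t → D t * Q k = 0 := by
    intro t k hne
    have h1 : D t * (ρ * Q k) = (lam k : ℂ) • (D t * Q k) := by rw [hρQ, mul_smul_comm]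
    have h2 : D t * ρ * Q k = (t : ℂ) • (D t * Q k) := by rw [hDρ, smul_mul_assoc]
    have h3 : ((t : ℂ) - (lam k : ℂ)) • (D t * Q k) = 0 := by
      rw [sub_smul, ← h2, ← h1, mul_assoc, sub_self]
    rcases smul_eq_zero.mp h3 with h | h
    · exact absurd (Complex.ofReal_injective (sub_eq_zero.mp h).symm) hne
    · exact h
  have hQDk : ∀ k, lam k ∈ T ∧ Q k * D (lam k) = Q k := by
    intro k
    have hQ1 : Q k = ∑ t ∈ T, Q k * D t := by rw [← Finset.mul_sum, hsumD, mul_one]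
    by_cases hmem : lam k ∈ T
    · refine ⟨hmem, ?_⟩
      have h := hQ1
      rw [Finset.sum_eq_single_of_mem (lam k) hmem
        (fun t _ ht => hQD0 k t (Ne.symm ht))] at h
      exact h.symm
    · exfalso
      apply hQne k
      rw [hQ1, Finset.sum_eq_zero]
      intro t ht
      exact hQD0 k t (fun h => hmem (h ▸ ht))
  have hsurj : ∀ t ∈ T, ∃ k, lam k = t := by
    intro t ht
    by_contra hno
    push_neg at hno
    have hD0 : D t = 0 := by
      have : D t = ∑ k, D t * Q k := by rw [← Finset.mul_sum, hQsum, mul_one]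
      rw [this, Finset.sum_eq_zero (fun k _ => hDQ0 t k (hno k))]
    have htr := htrD t
    rw [hD0, trace_zero] at htr
    obtain ⟨i, _, hi⟩ := Finset.mem_image.mp ht
    have hcard : 0 < (Finset.univ.filter (fun j => μ j = t)).card := by
      refine Finset.card_pos.mpr ⟨i, ?_⟩
      simp [hi]
    have : ((Finset.univ.filter (fun j => μ j = t)).card : ℂ) ≠ 0 :=
      Nat.cast_ne_zero.mpr hcard.ne'
    exact this htr.symm
  have hQeqD : ∀ k, Q k = D (lam k) := by
    intro k
    have h1 := (hQDk k).2
    have h2 : D (lam k) * Q k = D (lam k) := by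
      have h := (show D (lam k) = ∑ l, D (lam k) * Q l by rw [← Finset.mul_sum, hQsum, mul_one])
      rw [Finset.sum_eq_single_of_mem k (Finset.mem_univ k)
        (fun l _ hl => hDQ0 (lam k) l (fun hh => hl (hinj hh)))] at h
      exact h.symm
    have h3 : Q k * D (lam k) = D (lam k) := by
      have := congrArg conjTranspose h2
      rwa [conjTranspose_mul, (hQh k).eq, hDherm] at this
    rw [← h1, h3]
  refine ⟨fun k => ?_, fun f => ?_⟩
  · obtain ⟨i, _, hi⟩ := Finset.mem_image.mp (hQDk k).1
    exact ⟨i, hi⟩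
  · -- the sum identity
    have htrQ : ∀ k, (Q k).trace.re = ((Finset.univ.filter (fun i => μ i = lam k)).card : ℝ) := by
      intro k
      rw [hQeqD k, htrD (lam k)]
      simp
    have hchoice : ∀ i : n, ∃ k, lam k = μ i := fun i =>
      hsurj (μ i) (Finset.mem_image.mpr ⟨i, Finset.mem_univ i, rfl⟩)
    set g : n → κ := fun i => (hchoice i).choose with hgdef
    have hg : ∀ i, lam (g i) = μ i := fun i => (hchoice i).choose_spec
    have hfib := Finset.sum_fiberwise (Finset.univ : Finset n) g (fun i => f (μ i))
    rw [← hfib]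
    refine Finset.sum_congr rfl fun k _ => ?_
    have hfilter : Finset.univ.filter (fun i => g i = k)
        = Finset.univ.filter (fun i => μ i = lam k) := by
      ext i
      simp only [Finset.mem_filter, Finset.mem_univ, true_and]
      constructor
      · intro h; rw [← hg i, h]
      · intro h; exact hinj (by rw [hg i, h])
    rw [hfilter] at *
    have hconst : ∀ i ∈ Finset.univ.filter (fun i => μ i = lam k), f (μ i) = f (lam k) := by
      intro i hi
      rw [(Finset.mem_filter.mp hi).2]
    rw [Finset.sum_congr rfl hconst, Finset.sum_const, nsmul_eq_mul, htrQ k]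

end Helpers

/-- `S_O(C)(ρ) = S(ρ)` if and only if the coarse-graining of the spectral
projectors of `ρ` is rougher than `C` (i.e. `C_ρ ↪ C`). -/
theorem obsEntropy_eq_vnEntropy_iff {n : Type} [Fintype n] [DecidableEq n] {ι κ : Type}
    [Fintype ι] [Fintype κ]
    (P : ι → Matrix n n ℂ) (ρ : Matrix n n ℂ)
    (Q : κ → Matrix n n ℂ) (lam : κ → ℝ)
    (hP : IsCoarseGraining P) (hρ : IsDensityMatrix ρ)
    (hspec : IsSpectralDecomp ρ Q lam) :
    Finer Q P ↔ obsEntropy P ρ = vnEntropy hρ.1.1 := by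
  classical
  obtain ⟨hPh, hP2, hPne, hPorth, hPsum⟩ := hP
  obtain ⟨⟨hQh, hQ2, hQne, hQorth, hQsum⟩, hinj, hrep⟩ := hspec
  have hpsd := hρ.1
  set c : ι → κ → ℝ := fun i k => ((P i * Q k).trace).re with hcdef
  have hctr : ∀ i k, (P i * Q k).trace = (((Q k * P i)ᴴ) * (Q k * P i)).trace :=
    fun i k => trace_proj_mul (P i) (Q k) (hPh i) (hQh k) (hP2 i) (hQ2 k)
  have hcnn : ∀ i k, 0 ≤ c i k := by
    intro i k
    show 0 ≤ ((P i * Q k).trace).re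
    rw [hctr]
    exact trace_hmul_re_nonneg _
  have hczero : ∀ i k, c i k = 0 → P i * Q k = 0 := by
    intro i k h
    have h' : (((Q k * P i)ᴴ) * (Q k * P i)).trace.re = 0 := by rw [← hctr]; exact h
    have h0 : Q k * P i = 0 := eq_zero_of_trace_hmul_re _ h'
    have hadj : (Q k * P i)ᴴ = P i * Q k := by
      rw [conjTranspose_mul, (hPh i).eq, (hQh k).eq]
    rw [← hadj, h0, conjTranspose_zero]
  have hzeroc : ∀ i k, P i * Q k = 0 → c i k = 0 := by
    intro i k h
    show ((P i * Q k).trace).re = 0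
    rw [h, trace_zero, Complex.zero_re]
  have hvolP : ∀ i, vol P i = ∑ k, c i k := by
    intro i
    have h1 : ∑ k, (P i * Q k).trace = (P i).trace := by
      rw [← trace_sum, ← Finset.mul_sum, hQsum, mul_one]
    show ((P i).trace).re = ∑ k, ((P i * Q k).trace).re
    rw [← h1, Complex.re_sum]
  have hvolPpos : ∀ i, 0 < vol P i := by
    intro i
    have h2 : (P i).trace = (((P i)ᴴ) * (P i)).trace := by rw [(hPh i).eq, hP2 i]
    show 0 < ((P i).trace).re
    rw [h2]
    rcases (trace_hmul_re_nonneg (P i)).eq_or_lt with h | h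
    · exact absurd (eq_zero_of_trace_hmul_re _ h.symm) (hPne i)
    · exact h
  have hvolQ : ∀ k, ((Q k).trace).re = ∑ i, c i k := by
    intro k
    have h1 : ∑ i, (P i * Q k).trace = (Q k).trace := by
      rw [← trace_sum, ← Finset.sum_mul, hPsum, one_mul]
    show ((Q k).trace).re = ∑ i, ((P i * Q k).trace).re
    rw [← h1, Complex.re_sum]
  have hprob : ∀ i, prob P ρ i = ∑ k, c i k * lam k := by
    intro i
    show ((P i * ρ).trace).re = _
    have h1 : P i * ρ = ∑ k, (lam k : ℂ) • (P i * Q k) := by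
      rw [hrep, Finset.mul_sum]
      exact Finset.sum_congr rfl fun k _ => mul_smul_comm _ _ _
    rw [h1, trace_sum, Complex.re_sum]
    refine Finset.sum_congr rfl fun k _ => ?_
    rw [trace_smul, smul_eq_mul, Complex.re_ofReal_mul]
    ring
  have hmatch := spectral_match hρ.1.1 hQh hQ2 hQne hQorth hQsum hinj hrep
  have hlam_nn : ∀ k, 0 ≤ lam k := by
    intro k
    obtain ⟨i, hi⟩ := hmatch.1 k
    rw [← hi]
    exact hpsd.eigenvalues_nonneg i
  have hvn : vnEntropy hρ.1.1 = -∑ i, ∑ k, c i k * (lam k * Real.log (lam k)) := by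
    show -∑ i, (hρ.1.1.eigenvalues i) * Real.log (hρ.1.1.eigenvalues i) = _
    congr 1
    have h2 := hmatch.2 (fun x => x * Real.log x)
    rw [h2, Finset.sum_comm]
    refine Finset.sum_congr rfl fun k _ => ?_
    rw [hvolQ k, Finset.sum_mul]
  have hobs : obsEntropy P ρ = -∑ i,
      (∑ k, c i k * lam k) * Real.log ((∑ k, c i k * lam k) / (∑ k, c i k)) := by
    show -∑ i, prob P ρ i * Real.log (prob P ρ i / vol P i) = _
    congr 1
    refine Finset.sum_congr rfl fun i _ => ?_
    rw [hprob i, hvolP i]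
  have hle : ∀ i ∈ (Finset.univ : Finset ι),
      (∑ k, c i k * lam k) * Real.log ((∑ k, c i k * lam k) / (∑ k, c i k))
        ≤ ∑ k, c i k * (lam k * Real.log (lam k)) :=
    fun i _ => (jensen_step (c i) lam (hcnn i) hlam_nn hinj
      (by rw [← hvolP i]; exact hvolPpos i)).1
  constructor
  · intro hfine
    choose Ifun hIfun using hfine
    have hconc : ∀ i : ι, ∃ k₀, ∀ k, k ≠ k₀ → c i k = 0 := by
      intro i
      have hPQ : ∀ k, P i * Q k = if i ∈ Ifun k then P i else 0 := by
        intro k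
        rw [hIfun k, Finset.mul_sum]
        by_cases hmem : i ∈ Ifun k
        · rw [Finset.sum_eq_single_of_mem i hmem
            (fun j _ hj => hPorth i j (Ne.symm hj)), hP2 i, if_pos hmem]
        · rw [if_neg hmem, Finset.sum_eq_zero]
          intro j hj
          exact hPorth i j (fun h => hmem (h ▸ hj))
      have hex : ∃ k, i ∈ Ifun k := by
        by_contra hno
        push_neg at hno
        apply hPne i
        have h1 : P i = ∑ k, P i * Q k := by rw [← Finset.mul_sum, hQsum, mul_one]
        rw [h1, Finset.sum_eq_zero]
        intro k _
        rw [hPQ k, if_neg (hno k)]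
      obtain ⟨k₀, hk₀⟩ := hex
      refine ⟨k₀, fun k hk => ?_⟩
      apply hzeroc
      have h1 : P i * Q k₀ = P i := by rw [hPQ k₀, if_pos hk₀]
      calc P i * Q k = (P i * Q k₀) * Q k := by rw [h1]
        _ = P i * (Q k₀ * Q k) := by rw [mul_assoc]
        _ = 0 := by rw [hQorth k₀ k (Ne.symm hk), mul_zero]
    rw [hobs, hvn, neg_inj]
    refine Finset.sum_congr rfl fun i _ => ?_
    obtain ⟨k₀, hk₀⟩ := hconc i
    exact (jensen_step_eq (c i) lam k₀ hk₀).symm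
  · intro heq
    rw [hobs, hvn, neg_inj] at heq
    have hall := (Finset.sum_eq_sum_iff_of_le hle).mp heq
    have hconc : ∀ i : ι, ∃ k₀, ∀ k, k ≠ k₀ → c i k = 0 := fun i =>
      (jensen_step (c i) lam (hcnn i) hlam_nn hinj
        (by rw [← hvolP i]; exact hvolPpos i)).2 (hall i (Finset.mem_univ i)).symm
    set kf : ι → κ := fun i => (hconc i).choose with hkf
    have hkfs : ∀ i, ∀ k, k ≠ kf i → c i k = 0 := fun i => (hconc i).choose_spec
    have hPQ0 : ∀ i k, k ≠ kf i → P i * Q k = 0 := fun i k hk => hczero i k (hkfs i k hk)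
    have hPQ1 : ∀ i, P i * Q (kf i) = P i := by
      intro i
      have h := (show P i = ∑ k, P i * Q k by rw [← Finset.mul_sum, hQsum, mul_one])
      rw [Finset.sum_eq_single_of_mem (kf i) (Finset.mem_univ _)
        (fun k _ hk => hPQ0 i k hk)] at h
      exact h.symm
    have hQP1 : ∀ i, Q (kf i) * P i = P i := by
      intro i
      have h := congrArg conjTranspose (hPQ1 i)
      rwa [conjTranspose_mul, (hPh i).eq, (hQh (kf i)).eq] at h
    have hQP0 : ∀ i k, k ≠ kf i → Q k * P i = 0 := by
      intro i k hk
      calc Q k * P i = Q k * (Q (kf i) * P i) := by rw [hQP1 i]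
        _ = (Q k * Q (kf i)) * P i := by rw [mul_assoc]
        _ = 0 := by rw [hQorth k (kf i) hk, zero_mul]
    intro k
    refine ⟨Finset.univ.filter (fun i => kf i = k), ?_⟩
    have h1 : Q k = ∑ i, Q k * P i := by rw [← Finset.mul_sum, hPsum, mul_one]
    rw [h1, Finset.sum_filter]
    refine Finset.sum_congr rfl fun i _ => ?_
    by_cases h : kf i = k
    · rw [if_pos h, ← h, hQP1 i]
    · rw [if_neg h, hQP0 i k (fun hh => h hh.symm)]
end Helpers
end

section
/- The pure state |ψ⟩ = Σ_i √(tr P_i / dim H) |ψ_i⟩, where each |ψ_i⟩ is a unit vector in the subspace P_i H, achieves the maximal observational entropy: S_O(C)(|ψ⟩⟨ψ|) = ln dim H, the same value as the maximally mixed state I/dim H. -/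
open scoped BigOperators ComplexOrder
open Matrix

private lemma trace_mul_vecMulVec' {n : Type} [Fintype n] [DecidableEq n]
    (M : Matrix n n ℂ) (a b : n → ℂ) :
    (M * vecMulVec a b).trace = b ⬝ᵥ (M *ᵥ a) := by
  simp only [trace, diag, mul_apply, vecMulVec_apply, dotProduct, mulVec, Finset.mul_sum,
    Finset.sum_mul]
  congr 1; ext k; congr 1; ext l; ring

private lemma trace_re_nonneg_of_proj {n : Type} [Fintype n] [DecidableEq n] (M : Matrix n n ℂ)
    (hH : M.IsHermitian) (hI : M * M = M) : 0 ≤ M.trace.re := by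
  have : M = Mᴴ * M := by rw [hH.eq, hI]
  rw [this]
  simp only [trace, diag, mul_apply, conjTranspose_apply, Complex.re_sum]
  apply Finset.sum_nonneg; intro k _
  apply Finset.sum_nonneg; intro l _
  simp [← Complex.normSq_eq_conj_mul_self, Complex.normSq_nonneg]

private lemma sum_dotProduct' {n : Type} [Fintype n] {ι : Type} (s : Finset ι)
    (f : ι → (n → ℂ)) (w : n → ℂ) :
    (∑ i ∈ s, f i) ⬝ᵥ w = ∑ i ∈ s, f i ⬝ᵥ w := by
  simp only [dotProduct, Finset.sum_apply, Finset.sum_mul]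
  rw [Finset.sum_comm]

private lemma mulVec_sum' {n : Type} [Fintype n] [DecidableEq n] {ι : Type} (s : Finset ι)
    (M : Matrix n n ℂ) (f : ι → (n → ℂ)) :
    M *ᵥ (∑ i ∈ s, f i) = ∑ i ∈ s, M *ᵥ f i :=
  map_sum M.mulVecLin f s

private lemma entropy_calc {ι : Type} [Fintype ι] (V : ι → ℝ) (N : ℝ) (hN : 0 ≤ N)
    (hV : ∀ j, 0 ≤ V j) (hsum : ∑ j, V j = N) :
    -∑ j, (V j / N) * Real.log ((V j / N) / (V j)) = Real.log N := by
  rcases eq_or_lt_of_le hN with h0 | h0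
  · simp [← h0]
  · have key : ∀ j, (V j / N) * Real.log ((V j / N) / (V j))
        = (V j / N) * Real.log N⁻¹ := by
      intro j
      by_cases hVj : V j = 0
      · simp [hVj]
      · congr 2
        field_simp
    rw [Finset.sum_congr rfl (fun j _ => key j), ← Finset.sum_mul, ← Finset.sum_div, hsum,
      div_self h0.ne', one_mul, Real.log_inv, neg_neg]

/-- the pure state `|ψ⟩ = ∑_i √(tr P_i / dim H) |ψ_i⟩`, with each `|ψ_i⟩` a unit
vector in the subspace `P_i H`, achieves the maximal observational entropy `ln dim H`, the same
value as the maximally mixed state `I / dim H`. -/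
theorem pure_state_max_obsEntropy {n : Type} [Fintype n] [DecidableEq n] {ι : Type} [Fintype ι]
    (P : ι → Matrix n n ℂ) (hP : IsCoarseGraining P)
    (v : ι → (n → ℂ))
    (hv_mem : ∀ i, P i *ᵥ v i = v i)
    (hv_unit : ∀ i, star (v i) ⬝ᵥ v i = 1) :
    obsEntropy P
        (Matrix.vecMulVec (∑ i, (Real.sqrt (vol P i / (Fintype.card n)) : ℂ) • v i)
          (star (∑ i, (Real.sqrt (vol P i / (Fintype.card n)) : ℂ) • v i)))
      = Real.log (Fintype.card n) ∧
    obsEntropy P (((Fintype.card n : ℂ))⁻¹ • (1 : Matrix n n ℂ)) = Real.log (Fintype.card n) := by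
  obtain ⟨hH, hI, -, horth, hsum⟩ := hP
  set N : ℝ := (Fintype.card n : ℝ) with hN
  have hN0 : (0:ℝ) ≤ N := Nat.cast_nonneg _
  have hvol0 : ∀ i, 0 ≤ vol P i := fun i => trace_re_nonneg_of_proj _ (hH i) (hI i)
  have hvolsum : ∑ i, vol P i = N := by
    have : (∑ i, P i).trace = (1 : Matrix n n ℂ).trace := by rw [hsum]
    rw [trace_sum, trace_one] at this
    calc ∑ i, vol P i = (∑ i, (P i).trace).re := by simp [vol, Complex.re_sum]
      _ = N := by rw [this]; simp [hN]
  set c : ι → ℂ := fun i => (Real.sqrt (vol P i / (Fintype.card n)) : ℂ) with hc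
  set ψ : n → ℂ := ∑ i, c i • v i with hψ
  have hPv : ∀ i j, i ≠ j → P j *ᵥ v i = 0 := by
    intro i j hij
    rw [← hv_mem i, mulVec_mulVec, horth j i (Ne.symm hij), zero_mulVec]
  have hvorth : ∀ i j, i ≠ j → star (v i) ⬝ᵥ v j = 0 := by
    intro i j hij
    rw [← hv_mem j, dotProduct_mulVec]
    have : star (v i) ᵥ* P j = 0 := by
      rw [← (hH j).eq, ← star_mulVec, hPv i j hij, star_zero]
    rw [this, zero_dotProduct]
  have hPψ : ∀ j, P j *ᵥ ψ = c j • v j := by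
    intro j
    rw [hψ, mulVec_sum']
    rw [Finset.sum_eq_single j]
    · rw [mulVec_smul, hv_mem]
    · intro i _ hij
      rw [mulVec_smul, hPv i j hij, smul_zero]
    · simp
  have hcc : ∀ j, c j * c j = ((vol P j / N : ℝ) : ℂ) := by
    intro j
    rw [hc]
    rw [← Complex.ofReal_mul, Real.mul_self_sqrt (div_nonneg (hvol0 j) hN0)]
  have hprob_pure : ∀ j, prob P (Matrix.vecMulVec ψ (star ψ)) j = vol P j / N := by
    intro j
    rw [prob, trace_mul_vecMulVec', hPψ j]
    have : star ψ ⬝ᵥ (c j • v j) = c j * c j := by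
      rw [hψ, star_sum, sum_dotProduct']
      rw [Finset.sum_eq_single j]
      · rw [star_smul, smul_dotProduct, dotProduct_smul, hv_unit j]
        simp [hc, smul_eq_mul]
      · intro i _ hij
        rw [star_smul, smul_dotProduct, dotProduct_smul, hvorth i j hij]
        simp
      · simp
    rw [this, hcc j, Complex.ofReal_re]
  have hprob_mix : ∀ j, prob P (((Fintype.card n : ℂ))⁻¹ • (1 : Matrix n n ℂ)) j
      = vol P j / N := by
    intro j
    rw [prob, Matrix.mul_smul, mul_one, trace_smul]
    have : ((Fintype.card n : ℂ))⁻¹ = ((N⁻¹ : ℝ) : ℂ) := by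
      rw [hN]; push_cast; ring
    rw [this, smul_eq_mul, Complex.re_ofReal_mul, vol, div_eq_inv_mul]
  constructor
  · rw [obsEntropy]
    rw [Finset.sum_congr rfl (fun j _ => by rw [hprob_pure j])]
    exact entropy_calc (vol P) N hN0 hvol0 hvolsum
  · rw [obsEntropy]
    rw [Finset.sum_congr rfl (fun j _ => by rw [hprob_mix j])]
    exact entropy_calc (vol P) N hN0 hvol0 hvolsum
end

section
/- Observational entropy is extensive: for a tensor-product Hilbert space H = H^(1) ⊗ ⋯ ⊗ H^(m), a product coarse-graining C = C^(1) ⊗ ⋯ ⊗ C^(m) whose elements are P_{i₁} ⊗ ⋯ ⊗ P_{i_m}, and a product state ρ = ρ^(1) ⊗ ⋯ ⊗ ρ^(m), one has S_O(C)(ρ) = Σ_{k=1}^m S_O(C^(k))(ρ^(k)). -/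
open scoped BigOperators ComplexOrder
open Matrix

lemma ent_prod {m : ℕ} (ι : Fin m → Type) [∀ k, Fintype (ι k)]
    (f v : ∀ k, ι k → ℝ) (hv : ∀ k a, 0 < v k a)
    (hsum : ∀ k, ∑ a, f k a = 1) :
    ∑ i : (∀ k, ι k), (∏ k, f k (i k)) * Real.log ((∏ k, f k (i k)) / ∏ k, v k (i k))
      = ∑ k, ∑ a, f k a * Real.log (f k a / v k a) := by
  have step1 : ∀ i : (∀ k, ι k),
      (∏ k, f k (i k)) * Real.log ((∏ k, f k (i k)) / ∏ k, v k (i k))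
        = ∑ k, (∏ j, f j (i j)) * Real.log (f k (i k) / v k (i k)) := by
    intro i
    by_cases h : ∀ k, f k (i k) ≠ 0
    · have hlog : Real.log ((∏ k, f k (i k)) / ∏ k, v k (i k))
          = ∑ k, Real.log (f k (i k) / v k (i k)) := by
        rw [← Finset.prod_div_distrib, Real.log_prod]
        intro k _
        exact div_ne_zero (h k) (hv k _).ne'
      rw [hlog, Finset.mul_sum]
    · push_neg at h; obtain ⟨k0, hk0⟩ := h
      have hz : (∏ k, f k (i k)) = 0 := Finset.prod_eq_zero (Finset.mem_univ k0) hk0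
      rw [hz, zero_mul]
      symm; apply Finset.sum_eq_zero; intro k _; exact zero_mul _
  rw [Finset.sum_congr rfl fun i _ => step1 i, Finset.sum_comm]
  refine Finset.sum_congr rfl fun k _ => ?_
  set g : ∀ j, ι j → ℝ :=
    Function.update f k (fun a => f k a * Real.log (f k a / v k a)) with hg
  have hterm : ∀ i : (∀ j, ι j),
      (∏ j, f j (i j)) * Real.log (f k (i k) / v k (i k)) = ∏ j, g j (i j) := by
    intro i
    rw [← Finset.mul_prod_erase Finset.univ _ (Finset.mem_univ k),
        ← Finset.mul_prod_erase Finset.univ (fun j => g j (i j)) (Finset.mem_univ k)]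
    have h1 : g k (i k) = f k (i k) * Real.log (f k (i k) / v k (i k)) := by
      rw [hg, Function.update_self]
    have h2 : ∀ j ∈ Finset.univ.erase k, g j (i j) = f j (i j) := by
      intro j hj
      rw [hg, Function.update_of_ne (Finset.ne_of_mem_erase hj)]
    rw [h1, Finset.prod_congr rfl h2]
    ring
  rw [Finset.sum_congr rfl fun i _ => hterm i, ← Fintype.prod_sum g,
    Finset.prod_eq_single k
      (fun j _ hj => by rw [hg, Function.update_of_ne hj]; exact hsum j)
      (fun h => absurd (Finset.mem_univ k) h)]
  rw [hg]
  simp [Function.update_self]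

lemma trace_pi_prod {m : ℕ} {d : Fin m → Type} [∀ k, Fintype (d k)]
    (A : ∀ k, Matrix (d k) (d k) ℂ) :
    (Matrix.of fun x y : (∀ k, d k) => ∏ k, A k (x k) (y k)).trace
      = ∏ k, (A k).trace := by
  rw [Matrix.trace]
  simp only [Matrix.diag, Matrix.of_apply, Matrix.trace]
  exact (Fintype.prod_sum fun k a => A k a a).symm

lemma trace_mul_pi_prod {m : ℕ} {d : Fin m → Type} [∀ k, Fintype (d k)]
    (A B : ∀ k, Matrix (d k) (d k) ℂ) :
    ((Matrix.of fun x y : (∀ k, d k) => ∏ k, A k (x k) (y k)) *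
      (Matrix.of fun x y : (∀ k, d k) => ∏ k, B k (x k) (y k))).trace
      = ∏ k, (A k * B k).trace := by
  have h1 : ∀ k, (A k * B k).trace = ∑ a, ∑ b, A k a b * B k b a := by
    intro k
    rw [Matrix.trace]
    simp [Matrix.diag, Matrix.mul_apply]
  rw [Matrix.trace]
  simp only [Matrix.diag, Matrix.mul_apply, Matrix.of_apply]
  calc ∑ x : ∀ k, d k, ∑ y : ∀ k, d k, (∏ k, A k (x k) (y k)) * ∏ k, B k (y k) (x k)
      = ∑ x : ∀ k, d k, ∑ y : ∀ k, d k, ∏ k, A k (x k) (y k) * B k (y k) (x k) := by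
        refine Finset.sum_congr rfl fun x _ => Finset.sum_congr rfl fun y _ => ?_
        rw [Finset.prod_mul_distrib]
    _ = ∑ x : ∀ k, d k, ∏ k, ∑ b, A k (x k) b * B k b (x k) := by
        refine Finset.sum_congr rfl fun x _ => ?_
        exact (Fintype.prod_sum fun k b => A k (x k) b * B k b (x k)).symm
    _ = ∏ k, ∑ a, ∑ b, A k a b * B k b a :=
        (Fintype.prod_sum fun k a => ∑ b, A k a b * B k b a).symm
    _ = ∏ k, (A k * B k).trace := by rw [Finset.prod_congr rfl fun k _ => (h1 k).symm]

lemma psd_diag_nonneg {n : Type} [Fintype n] [DecidableEq n] {M : Matrix n n ℂ}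
    (hM : M.PosSemidef) (i : n) : 0 ≤ M i i := by
  have := hM.dotProduct_mulVec_nonneg (Pi.single i 1)
  simpa [dotProduct, mulVec, Pi.single_apply] using this

lemma psd_trace_nonneg {n : Type} [Fintype n] [DecidableEq n] {M : Matrix n n ℂ}
    (hM : M.PosSemidef) : 0 ≤ M.trace :=
  Finset.sum_nonneg fun i _ => psd_diag_nonneg hM i

lemma nonneg_eq_re {z : ℂ} (h : 0 ≤ z) : z = (z.re : ℂ) := by
  obtain ⟨h1, h2⟩ := Complex.nonneg_iff.mp h
  exact Complex.ext (by simp) (by simp [← h2])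

lemma prob_trace_eq {n ι : Type} [Fintype n] [DecidableEq n] [Fintype ι]
    {P : ι → Matrix n n ℂ} {ρ : Matrix n n ℂ} (hP : IsCoarseGraining P)
    (hρ : IsDensityMatrix ρ) (i : ι) :
    (P i * ρ).trace = (prob P ρ i : ℂ) ∧ 0 ≤ prob P ρ i := by
  obtain ⟨hherm, hidem, -, -, -⟩ := hP
  have hpsd : (P i * ρ * (P i)ᴴ).PosSemidef := hρ.1.mul_mul_conjTranspose_same _
  have heq : (P i * ρ * (P i)ᴴ).trace = (P i * ρ).trace := by
    rw [(hherm i).eq, Matrix.trace_mul_cycle, hidem i]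
  have h0 : 0 ≤ (P i * ρ).trace := heq ▸ psd_trace_nonneg hpsd
  exact ⟨nonneg_eq_re h0, (Complex.nonneg_iff.mp h0).1⟩

lemma vol_trace_eq {n ι : Type} [Fintype n] [DecidableEq n] [Fintype ι]
    {P : ι → Matrix n n ℂ} (hP : IsCoarseGraining P) (i : ι) :
    (P i).trace = (vol P i : ℂ) ∧ 0 < vol P i := by
  obtain ⟨hherm, hidem, hne, -, -⟩ := hP
  have hPP : (P i)ᴴ * P i = P i := by rw [(hherm i).eq, hidem i]
  have hC : (P i).trace = ((∑ j, ∑ l, Complex.normSq (P i l j) : ℝ) : ℂ) := by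
    conv_lhs => rw [← hPP]
    rw [Matrix.trace]
    push_cast
    simp only [Matrix.diag, Matrix.mul_apply, Matrix.conjTranspose_apply, Complex.star_def]
    exact Finset.sum_congr rfl fun j _ => Finset.sum_congr rfl fun l _ =>
      Complex.normSq_eq_conj_mul_self.symm
  have hvol : vol P i = ∑ j, ∑ l, Complex.normSq (P i l j) := by
    unfold vol; rw [hC, Complex.ofReal_re]
  refine ⟨by rw [hC, hvol], ?_⟩
  rw [hvol]
  rcases (Finset.sum_nonneg fun j _ => Finset.sum_nonneg fun l _ =>
      Complex.normSq_nonneg _).lt_or_eq with h | h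
  · exact h
  · exfalso
    apply hne i
    ext a b
    have := (Finset.sum_eq_zero_iff_of_nonneg fun j _ => Finset.sum_nonneg fun l _ =>
      Complex.normSq_nonneg _).mp h.symm b (Finset.mem_univ b)
    have := (Finset.sum_eq_zero_iff_of_nonneg fun l _ =>
      Complex.normSq_nonneg _).mp this a (Finset.mem_univ a)
    simpa [Complex.normSq_eq_zero] using this

lemma prob_sum_one {n ι : Type} [Fintype n] [DecidableEq n] [Fintype ι]
    {P : ι → Matrix n n ℂ} {ρ : Matrix n n ℂ} (hP : IsCoarseGraining P)
    (hρ : IsDensityMatrix ρ) : ∑ i, prob P ρ i = 1 := by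
  have : ∑ i, (P i * ρ).trace = 1 := by
    rw [← Matrix.trace_sum]
    rw [← Finset.sum_mul, hP.2.2.2.2, Matrix.one_mul, hρ.2]
  have h2 : ((∑ i, prob P ρ i : ℝ) : ℂ) = 1 := by
    push_cast
    rw [← this]
    exact Finset.sum_congr rfl fun i _ => ((prob_trace_eq hP hρ i).1).symm
  exact Complex.ofReal_eq_one.mp h2
/-- observational entropy is extensive: for a product coarse-graining
`C = C^(1) ⊗ ⋯ ⊗ C^(m)` and a product state `ρ = ρ^(1) ⊗ ⋯ ⊗ ρ^(m)`,
`S_O(C)(ρ) = ∑_k S_O(C^(k))(ρ^(k))`. -/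
theorem obsEntropy_extensive {m : ℕ} (d : Fin m → Type) [∀ k, Fintype (d k)]
    [∀ k, DecidableEq (d k)] (ι : Fin m → Type) [∀ k, Fintype (ι k)]
    (P : ∀ k, ι k → Matrix (d k) (d k) ℂ) (ρ : ∀ k, Matrix (d k) (d k) ℂ)
    (hP : ∀ k, IsCoarseGraining (P k)) (hρ : ∀ k, IsDensityMatrix (ρ k)) :
    obsEntropy
        (fun i : (∀ k, ι k) =>
          Matrix.of fun x y : (∀ k, d k) => ∏ k, P k (i k) (x k) (y k))
        (Matrix.of fun x y : (∀ k, d k) => ∏ k, ρ k (x k) (y k))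
      = ∑ k, obsEntropy (P k) (ρ k) := by
  have hprob : ∀ i : (∀ k, ι k),
      prob (fun i : (∀ k, ι k) =>
          Matrix.of fun x y : (∀ k, d k) => ∏ k, P k (i k) (x k) (y k))
        (Matrix.of fun x y : (∀ k, d k) => ∏ k, ρ k (x k) (y k)) i
        = ∏ k, prob (P k) (ρ k) (i k) := by
    intro i
    unfold prob
    rw [trace_mul_pi_prod (fun k => P k (i k)) ρ,
      Finset.prod_congr rfl fun k _ => (prob_trace_eq (hP k) (hρ k) (i k)).1,
      ← Complex.ofReal_prod, Complex.ofReal_re]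
    rfl
  have hvol : ∀ i : (∀ k, ι k),
      vol (fun i : (∀ k, ι k) =>
          Matrix.of fun x y : (∀ k, d k) => ∏ k, P k (i k) (x k) (y k)) i
        = ∏ k, vol (P k) (i k) := by
    intro i
    unfold vol
    rw [trace_pi_prod (fun k => P k (i k)),
      Finset.prod_congr rfl fun k _ => (vol_trace_eq (hP k) (i k)).1,
      ← Complex.ofReal_prod, Complex.ofReal_re]
    rfl
  unfold obsEntropy
  have h1 : ∑ i : (∀ k, ι k),
      prob (fun i : (∀ k, ι k) =>
          Matrix.of fun x y : (∀ k, d k) => ∏ k, P k (i k) (x k) (y k))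
        (Matrix.of fun x y : (∀ k, d k) => ∏ k, ρ k (x k) (y k)) i *
      Real.log
        (prob (fun i : (∀ k, ι k) =>
            Matrix.of fun x y : (∀ k, d k) => ∏ k, P k (i k) (x k) (y k))
          (Matrix.of fun x y : (∀ k, d k) => ∏ k, ρ k (x k) (y k)) i /
         vol (fun i : (∀ k, ι k) =>
            Matrix.of fun x y : (∀ k, d k) => ∏ k, P k (i k) (x k) (y k)) i)
      = ∑ i : (∀ k, ι k), (∏ k, prob (P k) (ρ k) (i k)) *
          Real.log ((∏ k, prob (P k) (ρ k) (i k)) / ∏ k, vol (P k) (i k)) :=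
    Finset.sum_congr rfl fun i _ => by rw [hprob i, hvol i]
  rw [h1, ent_prod ι (fun k a => prob (P k) (ρ k) a) (fun k a => vol (P k) a)
    (fun k a => (vol_trace_eq (hP k) a).2) (fun k => prob_sum_one (hP k) (hρ k)),
    Finset.sum_neg_distrib]
end

section
/- If every projector in the coarse-graining C commutes with the Hamiltonian H, then the observational entropy is constant under unitary evolution: S_O(C)(U(t) ρ U(t)†) = S_O(C)(ρ) for all t, where U(t) = exp(-iHt). -/
open scoped BigOperators ComplexOrder
open Matrix

/-- if every projector of the coarse-graining commutes with the Hamiltonian,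
then observational entropy is constant under the unitary evolution `U(t) = exp(-iHt)`:
`S_O(C)(U(t) ρ U(t)†) = S_O(C)(ρ)`. -/
theorem obsEntropy_const_of_commute {n : Type} [Fintype n] [DecidableEq n] {ι : Type} [Fintype ι]
    (P : ι → Matrix n n ℂ) (Hm ρ : Matrix n n ℂ)
    (hP : IsCoarseGraining P) (hH : Hm.IsHermitian) (hρ : IsDensityMatrix ρ)
    (hcomm : ∀ i, P i * Hm = Hm * P i) (t : ℝ) :
    obsEntropy P
        (NormedSpace.exp ((-(t : ℂ) * Complex.I) • Hm) * ρ *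
          (NormedSpace.exp ((-(t : ℂ) * Complex.I) • Hm))ᴴ)
      = obsEntropy P ρ := by
  set U := NormedSpace.exp ((-(t : ℂ) * Complex.I) • Hm) with hU
  have hUH : Uᴴ = NormedSpace.exp (((t : ℂ) * Complex.I) • Hm) := by
    rw [hU, ← Matrix.exp_conjTranspose]
    congr 1
    rw [Matrix.conjTranspose_smul, hH.eq]
    congr 1
    simp [Complex.ext_iff]
  have hUU : Uᴴ * U = 1 := by
    rw [hUH, hU, ← Matrix.exp_add_of_commute]
    · rw [← add_smul]
      norm_num [NormedSpace.exp_zero]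
    · exact (Commute.refl Hm).smul_left _ |>.smul_right _
  have key : ∀ i, prob P (U * ρ * Uᴴ) i = prob P ρ i := by
    intro i
    have hcH : Commute Hm (P i) := (hcomm i).symm
    have hcU : Commute U (P i) := (hcH.smul_left _).exp_left
    have hcU' : Commute Uᴴ (P i) := by
      rw [hUH]; exact (hcH.smul_left _).exp_left
    unfold prob
    congr 1
    calc (P i * (U * ρ * Uᴴ)).trace = ((P i * (U * ρ)) * Uᴴ).trace := by
          congr 1; noncomm_ring
      _ = (Uᴴ * (P i * (U * ρ))).trace := by rw [Matrix.trace_mul_comm]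
      _ = (P i * (Uᴴ * U) * ρ).trace := by
          rw [← mul_assoc, hcU'.eq]; congr 1; noncomm_ring
      _ = (P i * ρ).trace := by rw [hUU, mul_one]
  unfold obsEntropy
  simp only [key]
end

section
/- Observational entropy with multiple coarse-grainings is bounded: for any ordered set of coarse-grainings (C₁,…,C_n) and density matrix ρ, S(ρ) ≤ S_O(C₁,…,C_n)(ρ) ≤ ln dim H. -/
open scoped BigOperators ComplexOrder
open Matrix

/-- The descending product `P_{i_n} ⋯ P_{i₁}` for a sequence of coarse-grainings and a
multi-index `i`. -/
noncomputable def seqProd {n : Type} [Fintype n] [DecidableEq n] {N : ℕ} {ι : Fin N → Type}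
    (P : ∀ k, ι k → Matrix n n ℂ) (i : ∀ k, ι k) : Matrix n n ℂ :=
  ((List.finRange N).reverse.map (fun k => P k (i k))).prod

/-- Probability of the multi-macrostate `(i₁, …, i_n)`:
`p_{i₁,…,i_n} = tr(P_{i_n}⋯P_{i₁} ρ P_{i₁}⋯P_{i_n})`. -/
noncomputable def mProb {n : Type} [Fintype n] [DecidableEq n] {N : ℕ} {ι : Fin N → Type}
    [∀ k, Fintype (ι k)] (P : ∀ k, ι k → Matrix n n ℂ) (ρ : Matrix n n ℂ)
    (i : ∀ k, ι k) : ℝ :=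
  ((seqProd P i * ρ * (seqProd P i)ᴴ).trace).re

/-- Volume of the multi-macrostate `(i₁, …, i_n)`:
`V_{i₁,…,i_n} = tr(P_{i_n}⋯P_{i₁}⋯P_{i_n})`. -/
noncomputable def mVol {n : Type} [Fintype n] [DecidableEq n] {N : ℕ} {ι : Fin N → Type}
    [∀ k, Fintype (ι k)] (P : ∀ k, ι k → Matrix n n ℂ) (i : ∀ k, ι k) : ℝ :=
  ((seqProd P i * (seqProd P i)ᴴ).trace).re

/-- Observational entropy with multiple coarse-grainings
`S_O(C₁,…,C_n)(ρ) = -∑ p_{i₁,…,i_n} ln (p_{i₁,…,i_n} / V_{i₁,…,i_n})`. -/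
noncomputable def mObsEntropy {n : Type} [Fintype n] [DecidableEq n] {N : ℕ} {ι : Fin N → Type}
    [∀ k, Fintype (ι k)] (P : ∀ k, ι k → Matrix n n ℂ) (ρ : Matrix n n ℂ) : ℝ :=
  -∑ i : (∀ k, ι k), mProb P ρ i * Real.log (mProb P ρ i / mVol P i)

private lemma term_ineq (c l p V : ℝ) (hc : 0 ≤ c) (hl : 0 ≤ l) (hp0 : 0 ≤ p) (hV0 : 0 ≤ V)
    (hlc : l * c ≤ p) (hcV : c ≤ V) :
    c * l - c * (p / V) ≤ c * (l * Real.log l) - l * c * Real.log (p / V) := by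
  rcases hc.eq_or_lt with rfl | hc
  · simp
  rcases hl.eq_or_lt with rfl | hl
  · simp only [mul_zero, zero_mul, Real.log_zero, zero_sub, mul_zero, sub_zero]
    have : 0 ≤ c * (p / V) := by positivity
    linarith
  have hp : 0 < p := lt_of_lt_of_le (by positivity) hlc
  have hV : 0 < V := lt_of_lt_of_le hc hcV
  have hx : 0 < l * V / p := by positivity
  have hlog := Real.one_sub_inv_le_log_of_pos hx
  have hxinv : (l * V / p)⁻¹ = p / (l * V) := by
    field_simp
  have hlx : Real.log (l * V / p) = Real.log l - Real.log (p / V) := by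
    rw [Real.log_div (by positivity) hp.ne', Real.log_mul hl.ne' hV.ne',
      Real.log_div hp.ne' hV.ne']
    ring
  rw [hxinv, hlx] at hlog
  have hmul := mul_le_mul_of_nonneg_left hlog (le_of_lt (mul_pos hc hl))
  have he1 : c * l * (1 - p / (l * V)) = c * l - c * (p / V) := by
    field_simp
  have he2 : c * l * (Real.log l - Real.log (p / V))
      = c * (l * Real.log l) - l * c * Real.log (p / V) := by ring
  rw [he1, he2] at hmul
  exact hmul

private lemma key_lower {ι₁ ι₂ : Type} [Fintype ι₁] [Fintype ι₂]
    (c : ι₁ → ι₂ → ℝ) (lam : ι₂ → ℝ) (p V : ι₁ → ℝ)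
    (hc : ∀ i j, 0 ≤ c i j) (hlam : ∀ j, 0 ≤ lam j)
    (hp : ∀ i, p i = ∑ j, lam j * c i j)
    (hV : ∀ i, V i = ∑ j, c i j)
    (hcol : ∀ j, ∑ i, c i j = 1) :
    -∑ j, lam j * Real.log (lam j) ≤ -∑ i, p i * Real.log (p i / V i) := by
  have hp0 : ∀ i, 0 ≤ p i := fun i => (hp i) ▸
    Finset.sum_nonneg fun j _ => mul_nonneg (hlam j) (hc i j)
  have hV0 : ∀ i, 0 ≤ V i := fun i => (hV i) ▸ Finset.sum_nonneg fun j _ => hc i j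
  have hlc : ∀ i j, lam j * c i j ≤ p i := by
    intro i j
    rw [hp i]
    exact Finset.single_le_sum (fun j _ => mul_nonneg (hlam j) (hc i j)) (Finset.mem_univ j)
  have hcV : ∀ i j, c i j ≤ V i := by
    intro i j
    rw [hV i]
    exact Finset.single_le_sum (fun j _ => hc i j) (Finset.mem_univ j)
  apply neg_le_neg
  -- rewrite both sides as double sums
  have h1 : ∑ i, p i * Real.log (p i / V i)
      = ∑ i, ∑ j, lam j * c i j * Real.log (p i / V i) := by
    refine Finset.sum_congr rfl fun i _ => ?_
    rw [hp i, Finset.sum_mul]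
  have h2 : ∑ j, lam j * Real.log (lam j)
      = ∑ i, ∑ j, c i j * (lam j * Real.log (lam j)) := by
    rw [Finset.sum_comm]
    refine Finset.sum_congr rfl fun j _ => ?_
    rw [← Finset.sum_mul, hcol j, one_mul]
  rw [h1, h2]
  have key : ∑ i, ∑ j, (c i j * lam j - c i j * (p i / V i))
      ≤ ∑ i, ∑ j, (c i j * (lam j * Real.log (lam j))
        - lam j * c i j * Real.log (p i / V i)) := by
    refine Finset.sum_le_sum fun i _ => Finset.sum_le_sum fun j _ => ?_
    exact term_ineq (c i j) (lam j) (p i) (V i) (hc i j) (hlam j) (hp0 i) (hV0 i)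
      (hlc i j) (hcV i j)
  have hPV : ∀ i, p i / V i * V i = p i := by
    intro i
    rcases eq_or_ne (V i) 0 with hVi | hVi
    · have : p i = 0 := by
        have : ∀ j, c i j = 0 := by
          intro j
          have := hcV i j
          have := hc i j
          linarith [hcV i j, hc i j, hVi ▸ (le_refl (V i))]
        rw [hp i]
        simp [this]
      simp [hVi, this]
    · exact div_mul_cancel₀ _ hVi
  have hzero : ∑ i, ∑ j, (c i j * lam j - c i j * (p i / V i)) = 0 := by
    have e1 : ∑ i, ∑ j, c i j * lam j = ∑ j, lam j := by
      rw [Finset.sum_comm]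
      refine Finset.sum_congr rfl fun j _ => ?_
      rw [← Finset.sum_mul, hcol j, one_mul]
    have e2 : ∑ i, ∑ j, c i j * (p i / V i) = ∑ i, p i := by
      refine Finset.sum_congr rfl fun i _ => ?_
      rw [← Finset.sum_mul]
      rw [← hV i, mul_comm]
      exact hPV i
    have e3 : ∑ i, p i = ∑ j, lam j := by
      calc ∑ i, p i = ∑ i, ∑ j, lam j * c i j := Finset.sum_congr rfl fun i _ => hp i
        _ = ∑ j, lam j := by
            rw [Finset.sum_comm]
            refine Finset.sum_congr rfl fun j _ => ?_
            rw [← Finset.mul_sum, hcol j, mul_one]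
    simp only [Finset.sum_sub_distrib, e1, e2, e3, sub_self]
  have := key
  rw [hzero] at this
  simp only [Finset.sum_sub_distrib] at this
  linarith

private lemma key_upper {ι : Type} [Fintype ι] (p V : ι → ℝ) (d : ℝ) (hd : 0 < d)
    (hp0 : ∀ i, 0 ≤ p i) (hV0 : ∀ i, 0 ≤ V i)
    (hpz : ∀ i, V i = 0 → p i = 0)
    (hps : ∑ i, p i = 1) (hVs : ∑ i, V i = d) :
    -∑ i, p i * Real.log (p i / V i) ≤ Real.log d := by
  have hterm : ∀ i, -(p i * Real.log (p i / V i)) ≤ V i / d - p i + p i * Real.log d := by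
    intro i
    rcases (hp0 i).eq_or_lt with hpi | hpi
    · rw [← hpi]
      simp only [zero_mul, neg_zero, sub_zero, add_zero]
      exact div_nonneg (hV0 i) hd.le
    have hVi : 0 < V i := by
      rcases (hV0 i).eq_or_lt with hVi | hVi
      · exact absurd (hpz i hVi.symm) (ne_of_gt hpi)
      · exact hVi
    have h1 : -(p i * Real.log (p i / V i)) = p i * Real.log (V i / p i) := by
      rw [Real.log_div hVi.ne' hpi.ne', Real.log_div hpi.ne' hVi.ne']
      ring
    have h2 : Real.log (V i / p i) = Real.log (V i / (p i * d)) + Real.log d := by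
      rw [← Real.log_mul (by positivity) hd.ne']
      congr 1
      field_simp
    have h3 : p i * Real.log (V i / (p i * d)) ≤ V i / d - p i := by
      have hx : (0:ℝ) < V i / (p i * d) := by positivity
      have hlog := Real.log_le_sub_one_of_pos hx
      have h4 : p i * (V i / (p i * d)) = V i / d := by
        field_simp
      nlinarith [mul_le_mul_of_nonneg_left hlog (hp0 i)]
    rw [h1, h2]
    nlinarith [h3]
  calc -∑ i, p i * Real.log (p i / V i) = ∑ i, -(p i * Real.log (p i / V i)) := by
        rw [Finset.sum_neg_distrib]
    _ ≤ ∑ i, (V i / d - p i + p i * Real.log d) := Finset.sum_le_sum fun i _ => hterm i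
    _ = Real.log d := by
        simp only [Finset.sum_add_distrib, Finset.sum_sub_distrib, ← Finset.sum_div,
          ← Finset.sum_mul, hps, hVs, div_self hd.ne']
        ring


private lemma seqProd_zero {n : Type} [Fintype n] [DecidableEq n] {ι : Fin 0 → Type}
    (P : ∀ k, ι k → Matrix n n ℂ) (i : ∀ k, ι k) : seqProd P i = 1 := by
  simp [seqProd]

private lemma seqProd_succ {n : Type} [Fintype n] [DecidableEq n] {N : ℕ}
    {ι : Fin (N + 1) → Type} (P : ∀ k, ι k → Matrix n n ℂ) (i : ∀ k, ι k) :
    seqProd P i = seqProd (fun k => P k.succ) (fun k => i k.succ) * P 0 (i 0) := by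
  unfold seqProd
  rw [List.finRange_succ]
  simp [List.reverse_cons, List.map_append, List.prod_append, List.map_map, Function.comp_def,
    List.map_reverse]

private lemma psd_diag_re_nonneg {n : Type} [Fintype n] [DecidableEq n] {M : Matrix n n ℂ}
    (hM : M.PosSemidef) (j : n) : 0 ≤ (M j j).re := by
  have := hM.re_dotProduct_nonneg (Pi.single j 1)
  simpa [dotProduct, mulVec, Pi.single_apply, Finset.sum_ite_eq] using this

private lemma sum_conj_seqProd {n : Type} [Fintype n] [DecidableEq n] :
    ∀ {N : ℕ} {ι : Fin N → Type} [∀ k, Fintype (ι k)]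
      (P : ∀ k, ι k → Matrix n n ℂ)
      (_ : ∀ k i, (P k i).IsHermitian) (_ : ∀ k i, P k i * P k i = P k i)
      (_ : ∀ k, ∑ i, P k i = 1),
      ∑ i : ∀ k, ι k, (seqProd P i)ᴴ * seqProd P i = 1 := by
  intro N
  induction N with
  | zero =>
    intro ι _ P hH hI hS
    have h1 : ∀ i : (∀ k, ι k), (seqProd P i)ᴴ * seqProd P i = 1 := by
      intro i
      simp [seqProd_zero]
    rw [Finset.sum_congr rfl fun i _ => h1 i]
    simp
  | succ N ih =>
    intro ι _ P hH hI hS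
    rw [← Fintype.sum_equiv (Fin.consEquiv ι)
      (fun x => (seqProd P ((Fin.consEquiv ι) x))ᴴ * seqProd P ((Fin.consEquiv ι) x))
      (fun i => (seqProd P i)ᴴ * seqProd P i) (fun x => rfl)]
    rw [Fintype.sum_prod_type]
    have hx : ∀ (a : ι 0) (i' : ∀ k : Fin N, ι k.succ),
        seqProd P ((Fin.consEquiv ι) (a, i'))
          = seqProd (fun k => P k.succ) i' * P 0 a := by
      intro a i'
      rw [show ((Fin.consEquiv ι) (a, i')) = Fin.cons a i' from rfl, seqProd_succ]
      simp [Fin.cons_succ, Fin.cons_zero]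
    calc ∑ a, ∑ i', (seqProd P ((Fin.consEquiv ι) (a, i')))ᴴ
            * seqProd P ((Fin.consEquiv ι) (a, i'))
        = ∑ a, P 0 a * (∑ i' : ∀ k : Fin N, ι k.succ,
            (seqProd (fun k => P k.succ) i')ᴴ * seqProd (fun k => P k.succ) i') * P 0 a := by
          refine Finset.sum_congr rfl fun a _ => ?_
          rw [Finset.mul_sum, Finset.sum_mul]
          refine Finset.sum_congr rfl fun i' _ => ?_
          rw [hx a i', conjTranspose_mul, (hH 0 a).eq]
          simp only [mul_assoc]
      _ = 1 := by
          have := ih (fun k => P k.succ) (fun k i => hH k.succ i) (fun k i => hI k.succ i)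
            (fun k => hS k.succ)
          rw [Finset.sum_congr rfl fun a _ => by rw [this, mul_one, hI 0 a]]
          exact hS 0



/-- observational entropy with multiple coarse-grainings is bounded:
`S(ρ) ≤ S_O(C₁,…,C_n)(ρ) ≤ ln dim H`. -/
theorem mObsEntropy_bounded {n : Type} [Fintype n] [DecidableEq n] {N : ℕ} {ι : Fin N → Type}
    [∀ k, Fintype (ι k)] (P : ∀ k, ι k → Matrix n n ℂ) (ρ : Matrix n n ℂ)
    (hP : ∀ k, IsCoarseGraining (P k)) (hρ : IsDensityMatrix ρ) :
    vnEntropy hρ.1.1 ≤ mObsEntropy P ρ ∧ mObsEntropy P ρ ≤ Real.log (Fintype.card n) := by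
  classical
  have hPSD : ρ.PosSemidef := hρ.1
  have htr : ρ.trace = 1 := hρ.2
  have hH : ρ.IsHermitian := hρ.1.1
  set U : Matrix n n ℂ := (hH.eigenvectorUnitary : Matrix n n ℂ) with hUdef
  have hU1 : star U * U = 1 := (Matrix.mem_unitaryGroup_iff').mp hH.eigenvectorUnitary.2
  have hU2 : U * star U = 1 := (Matrix.mem_unitaryGroup_iff).mp hH.eigenvectorUnitary.2
  set lam : n → ℝ := hH.eigenvalues with hlamdef
  have hspec : ρ = U * diagonal (RCLike.ofReal ∘ lam) * star U := hH.spectral_theorem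
  set A : (∀ k, ι k) → Matrix n n ℂ := fun i => seqProd P i with hAdef
  set Q : (∀ k, ι k) → Matrix n n ℂ := fun i => (A i)ᴴ * A i with hQdef
  have hQsum : ∑ i, Q i = 1 :=
    sum_conj_seqProd P (fun k => (hP k).1) (fun k => (hP k).2.1) (fun k => (hP k).2.2.2.2)
  set c : (∀ k, ι k) → n → ℝ := fun i j => ((star U * Q i * U) j j).re with hcdef
  have hc : ∀ i j, 0 ≤ c i j := by
    intro i j
    have he : star U * Q i * U = (A i * U)ᴴ * (A i * U) := by
      simp only [hQdef, Matrix.star_eq_conjTranspose, conjTranspose_mul, mul_assoc]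
    have := psd_diag_re_nonneg (M := (A i * U)ᴴ * (A i * U))
      (posSemidef_conjTranspose_mul_self _) j
    rw [hcdef]
    simpa [he] using this
  have hcol : ∀ j, ∑ i, c i j = 1 := by
    intro j
    have hsum : ∑ i, star U * Q i * U = 1 := by
      rw [← Finset.sum_mul, ← Finset.mul_sum, hQsum, mul_one, hU1]
    calc ∑ i, c i j = (∑ i, (star U * Q i * U) j j).re := by rw [Complex.re_sum]
      _ = ((∑ i, star U * Q i * U) j j).re := by rw [Matrix.sum_apply]
      _ = 1 := by rw [hsum]; simp
  have hVc : ∀ i, mVol P i = ∑ j, c i j := by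
    intro i
    have h1 : (A i * (A i)ᴴ).trace = (star U * Q i * U).trace := by
      rw [trace_mul_comm, Matrix.trace_mul_cycle (star U) (Q i) U, ← mul_assoc, hU2, one_mul]
    show ((A i * (A i)ᴴ).trace).re = _
    rw [h1, Matrix.trace]
    rw [Complex.re_sum]
    rfl
  have hpc : ∀ i, mProb P ρ i = ∑ j, lam j * c i j := by
    intro i
    have h1 : (A i * ρ * (A i)ᴴ).trace
        = (star U * Q i * U * diagonal (RCLike.ofReal ∘ lam)).trace := by
      rw [Matrix.trace_mul_cycle (A i) ρ ((A i)ᴴ)]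
      conv_lhs => rw [hspec]
      rw [show (A i)ᴴ * A i * (U * diagonal (RCLike.ofReal ∘ lam) * star U)
        = ((A i)ᴴ * A i * U * diagonal (RCLike.ofReal ∘ lam)) * star U by
          simp only [mul_assoc]]
      rw [trace_mul_comm, ← mul_assoc, ← mul_assoc, ← mul_assoc]
    show ((A i * ρ * (A i)ᴴ).trace).re = _
    rw [h1, Matrix.trace, Complex.re_sum]
    refine Finset.sum_congr rfl fun j _ => ?_
    rw [Matrix.diag_apply, Matrix.mul_diagonal]
    simp [Complex.mul_re, mul_comm]
    exact Or.inl rfl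
  have hlam0 : ∀ j, 0 ≤ lam j := hPSD.eigenvalues_nonneg
  have hlam1 : ∑ j, lam j = 1 := by
    have h1 : ρ.trace = ∑ j, (lam j : ℂ) := by
      conv_lhs => rw [hspec]
      rw [Matrix.trace_mul_cycle U (diagonal (RCLike.ofReal ∘ lam)) (star U),
        hU1, one_mul, Matrix.trace_diagonal]
      rfl
    have := congrArg Complex.re (h1.symm.trans htr)
    rw [Complex.re_sum] at this
    simpa using this
  have hne : Nonempty n := by
    by_contra h
    rw [not_nonempty_iff] at h
    simp [Matrix.trace] at htr
  have hd : (0 : ℝ) < Fintype.card n := by exact_mod_cast Fintype.card_pos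
  have hp0 : ∀ i, 0 ≤ mProb P ρ i := fun i => (hpc i) ▸
    Finset.sum_nonneg fun j _ => mul_nonneg (hlam0 j) (hc i j)
  have hV0 : ∀ i, 0 ≤ mVol P i := fun i => (hVc i) ▸ Finset.sum_nonneg fun j _ => hc i j
  have hpz : ∀ i, mVol P i = 0 → mProb P ρ i = 0 := by
    intro i hV
    have hczero : ∀ j ∈ Finset.univ, c i j = 0 := by
      rw [hVc i] at hV
      exact (Finset.sum_eq_zero_iff_of_nonneg fun j _ => hc i j).mp hV
    rw [hpc i]
    exact Finset.sum_eq_zero fun j hj => by rw [hczero j hj, mul_zero]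
  have hps : ∑ i, mProb P ρ i = 1 := by
    rw [Finset.sum_congr rfl fun i _ => hpc i, Finset.sum_comm]
    calc ∑ j, ∑ i, lam j * c i j = ∑ j : n, lam j := by
          refine Finset.sum_congr rfl fun j _ => ?_
          rw [← Finset.mul_sum, hcol j, mul_one]
      _ = 1 := hlam1
  have hVs : ∑ i, mVol P i = (Fintype.card n : ℝ) := by
    rw [Finset.sum_congr rfl fun i _ => hVc i, Finset.sum_comm]
    simp [hcol]
  constructor
  · have := key_lower c lam (fun i => mProb P ρ i) (fun i => mVol P i) hc hlam0 hpc hVc hcol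
    exact this
  · exact key_upper (fun i => mProb P ρ i) (fun i => mVol P i) (Fintype.card n) hd
      hp0 hV0 hpz hps hVs
end

section
/- Observational entropy is non-increasing with each added coarse-graining: S_O(C₁,…,C_n)(ρ) ≥ S_O(C₁,…,C_n,C_{n+1})(ρ) for any ordered set of coarse-grainings and any density matrix ρ, with equality if and only if p_{i₁,…,i_{n+1}} = (V_{i₁,…,i_{n+1}}/V_{i₁,…,i_n}) p_{i₁,…,i_n} for all indices. -/
open scoped BigOperators ComplexOrder
open Matrix

section AuxLemmas

variable {n : Type} [Fintype n] [DecidableEq n]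

private lemma re_trace_mul_conjTranspose_self (S : Matrix n n ℂ) :
    ((S * Sᴴ).trace).re = ∑ i, ∑ j, Complex.normSq (S i j) := by
  simp only [Matrix.trace, Matrix.diag, Matrix.mul_apply, Matrix.conjTranspose_apply,
    Complex.re_sum]
  refine Finset.sum_congr rfl fun i _ => Finset.sum_congr rfl fun j _ => ?_
  rw [show star (S i j) = (starRingEnd ℂ) (S i j) from rfl, Complex.mul_conj]
  simp

private lemma re_trace_mul_conjTranspose_self_nonneg (S : Matrix n n ℂ) :
    0 ≤ ((S * Sᴴ).trace).re := by
  rw [re_trace_mul_conjTranspose_self]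
  exact Finset.sum_nonneg fun i _ => Finset.sum_nonneg fun j _ => Complex.normSq_nonneg _

private lemma eq_zero_of_re_trace_mul_conjTranspose_self {S : Matrix n n ℂ}
    (h : ((S * Sᴴ).trace).re = 0) : S = 0 := by
  rw [re_trace_mul_conjTranspose_self] at h
  ext i j
  have h1 := (Finset.sum_eq_zero_iff_of_nonneg
    (fun i _ => Finset.sum_nonneg fun j _ => Complex.normSq_nonneg (S i j))).mp h i
    (Finset.mem_univ i)
  have h2 := (Finset.sum_eq_zero_iff_of_nonneg
    (fun j _ => Complex.normSq_nonneg (S i j))).mp h1 j (Finset.mem_univ j)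
  simpa using Complex.normSq_eq_zero.mp h2

private lemma re_trace_nonneg_of_posSemidef {M : Matrix n n ℂ} (h : M.PosSemidef) :
    0 ≤ (M.trace).re := by
  rw [Matrix.trace, Complex.re_sum]
  refine Finset.sum_nonneg fun i _ => ?_
  have hx := h.dotProduct_mulVec_nonneg (Pi.single i 1)
  have hval : dotProduct (star (Pi.single i 1 : n → ℂ)) (M *ᵥ Pi.single i 1) = M i i := by
    simp [dotProduct, Matrix.mulVec, Pi.single_apply, apply_ite,
      Finset.sum_ite_eq, Finset.sum_ite_eq']
  rw [hval] at hx
  exact (Complex.le_def.mp hx).1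

private lemma gibbs {J : Type} [Fintype J] (f g : J → ℝ) (hf : ∀ j, 0 ≤ f j)
    (hg : ∀ j, 0 ≤ g j) (hfg : ∀ j, g j = 0 → f j = 0)
    (hsum : ∑ j, f j = ∑ j, g j) :
    0 ≤ ∑ j, f j * Real.log (f j / g j) ∧
      ((∑ j, f j * Real.log (f j / g j)) = 0 ↔ ∀ j, f j = g j) := by
  classical
  set h : J → ℝ := fun j => f j * Real.log (f j / g j) - (f j - g j) with hh
  have key : ∀ j, 0 ≤ h j ∧ (h j = 0 ↔ f j = g j) := by
    intro j
    rcases eq_or_lt_of_le (hf j) with h0 | h0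
    · constructor
      · simp [hh, ← h0, hg j]
      · simp only [hh, ← h0]
        constructor
        · intro he
          simpa using he.symm
        · intro he
          simp [← he]
    · have hgj : 0 < g j := by
        rcases eq_or_lt_of_le (hg j) with h1 | h1
        · exact absurd (hfg j h1.symm) (ne_of_gt h0)
        · exact h1
      set x := g j / f j with hx
      have hxpos : 0 < x := div_pos hgj h0
      have hfx : f j * x = g j := by
        rw [hx]; field_simp
      have hlog : Real.log (f j / g j) = -Real.log x := by
        rw [hx, ← Real.log_inv, inv_div]
      have hexp : h j = f j * (x - 1 - Real.log x) := by
        have : f j * (x - 1 - Real.log x)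
            = f j * x - f j - f j * Real.log x := by ring
        rw [hh]; simp only
        rw [hlog, this, hfx]; ring
      constructor
      · rw [hexp]
        have := Real.log_le_sub_one_of_pos hxpos
        nlinarith
      · rw [hexp]
        constructor
        · intro he
          have hzero : x - 1 - Real.log x = 0 := by
            rcases mul_eq_zero.mp he with h1 | h1
            · exact absurd h1 (ne_of_gt h0)
            · exact h1
          have hx1 : x = 1 := by
            by_contra hne
            have := Real.log_lt_sub_one_of_pos hxpos hne
            linarith
          have : g j = f j := by
            rw [← hfx, hx1, mul_one]
          linarith
        · intro he
          have hx1 : x = 1 := by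
            rw [hx, he, div_self (ne_of_gt (he ▸ h0))]
          rw [hx1]; simp
  have hsum_h : ∑ j, h j = ∑ j, f j * Real.log (f j / g j) := by
    rw [hh]
    rw [Finset.sum_sub_distrib, Finset.sum_sub_distrib, hsum]
    ring
  constructor
  · rw [← hsum_h]
    exact Finset.sum_nonneg fun j _ => (key j).1
  · rw [← hsum_h]
    constructor
    · intro hz j
      exact (key j).2.mp
        ((Finset.sum_eq_zero_iff_of_nonneg (fun j _ => (key j).1)).mp hz j (Finset.mem_univ j))
    · intro hz
      exact Finset.sum_eq_zero fun j _ => (key j).2.mpr (hz j)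

private lemma seqProd_eq_ofFn {N : ℕ} {ι : Fin N → Type}
    (P : ∀ k, ι k → Matrix n n ℂ) (i : ∀ k, ι k) :
    seqProd P i = ((List.ofFn fun k => P k (i k)).reverse).prod := by
  rw [seqProd, List.ofFn_eq_map]
  simp [List.map_reverse]

private lemma seqProd_snoc {N : ℕ} {ι : Fin (N + 1) → Type}
    (P : ∀ k, ι k → Matrix n n ℂ) (i' : ∀ k : Fin N, ι k.castSucc) (j : ι (Fin.last N)) :
    seqProd P (Fin.snoc i' j)
      = P (Fin.last N) j * seqProd (fun k : Fin N => P k.castSucc) i' := by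
  rw [seqProd_eq_ofFn, seqProd_eq_ofFn, List.ofFn_succ']
  simp only [Function.comp, Fin.snoc_castSucc, Fin.snoc_last]
  rw [List.concat_eq_append, List.reverse_append, List.reverse_singleton,
    List.singleton_append, List.prod_cons]

private lemma sum_re_trace_cg {ι : Type} [Fintype ι] {Q : ι → Matrix n n ℂ}
    (hherm : ∀ i, (Q i).IsHermitian) (hidem : ∀ i, Q i * Q i = Q i)
    (hone : ∑ i, Q i = 1) (M : Matrix n n ℂ) :
    ∑ j, ((Q j * M * (Q j)ᴴ).trace).re = (M.trace).re := by
  have hterm : ∀ j, (Q j * M * (Q j)ᴴ).trace = (Q j * M).trace := by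
    intro j
    rw [Matrix.trace_mul_cycle, (hherm j).eq, hidem j]
  simp only [hterm]
  rw [← Complex.re_sum, ← Matrix.trace_sum]
  congr 2
  rw [← Finset.sum_mul, hone, one_mul]

private lemma sum_snoc {N : ℕ} {ι : Fin (N + 1) → Type} [∀ k, Fintype (ι k)]
    (F : (∀ k, ι k) → ℝ) :
    ∑ i, F i = ∑ i' : ∀ k : Fin N, ι k.castSucc, ∑ j : ι (Fin.last N), F (Fin.snoc i' j) := by
  rw [← (Fin.snocEquiv ι).sum_comp F, Fintype.sum_prod_type]
  rw [Finset.sum_comm]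
  rfl

end AuxLemmas

/-- observational entropy is non-increasing with each added coarse-graining:
`S_O(C₁,…,C_n)(ρ) ≥ S_O(C₁,…,C_n,C_{n+1})(ρ)`, with equality iff
`p_{i₁,…,i_{n+1}} = (V_{i₁,…,i_{n+1}}/V_{i₁,…,i_n}) p_{i₁,…,i_n}` for all indices. -/
theorem mObsEntropy_antitone {n : Type} [Fintype n] [DecidableEq n] {N : ℕ}
    {ι : Fin (N + 1) → Type} [∀ k, Fintype (ι k)]
    (P : ∀ k, ι k → Matrix n n ℂ) (ρ : Matrix n n ℂ)
    (hP : ∀ k, IsCoarseGraining (P k)) (hρ : IsDensityMatrix ρ) :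
    mObsEntropy (fun k : Fin N => P k.castSucc) ρ ≥ mObsEntropy P ρ ∧
    (mObsEntropy (fun k : Fin N => P k.castSucc) ρ = mObsEntropy P ρ ↔
      ∀ i : ∀ k, ι k,
        mProb P ρ i =
          (mVol P i / mVol (fun k : Fin N => P k.castSucc) (fun k => i k.castSucc)) *
            mProb (fun k : Fin N => P k.castSucc) ρ (fun k => i k.castSucc)) := by
  
  classical
  obtain ⟨hρpsd, -⟩ := hρ
  obtain ⟨hQh, hQi, -, -, hQ1⟩ := hP (Fin.last N)
  set Pl : ∀ k : Fin N, ι k.castSucc → Matrix n n ℂ := fun k => P k.castSucc with hPl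
  set p : (∀ k : Fin N, ι k.castSucc) → ℝ := fun i' => mProb Pl ρ i' with hpdef
  set V : (∀ k : Fin N, ι k.castSucc) → ℝ := fun i' => mVol Pl i' with hVdef
  set f : (∀ k : Fin N, ι k.castSucc) → ι (Fin.last N) → ℝ :=
    fun i' j => mProb P ρ (Fin.snoc i' j) with hfdef
  set W : (∀ k : Fin N, ι k.castSucc) → ι (Fin.last N) → ℝ :=
    fun i' j => mVol P (Fin.snoc i' j) with hWdef
  set g : (∀ k : Fin N, ι k.castSucc) → ι (Fin.last N) → ℝ :=
    fun i' j => W i' j * (p i' / V i') with hgdef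
  have hsnoc : ∀ (i' : ∀ k : Fin N, ι k.castSucc) (j : ι (Fin.last N)),
      seqProd P (Fin.snoc i' j) = P (Fin.last N) j * seqProd Pl i' :=
    fun i' j => seqProd_snoc P i' j
  have hfW : ∀ i' j, f i' j = ((P (Fin.last N) j *
      (seqProd Pl i' * ρ * (seqProd Pl i')ᴴ) * (P (Fin.last N) j)ᴴ).trace).re := by
    intro i' j
    show ((seqProd P (Fin.snoc i' j) * ρ * (seqProd P (Fin.snoc i' j))ᴴ).trace).re = _
    rw [hsnoc i' j]
    simp only [Matrix.conjTranspose_mul, Matrix.mul_assoc]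
  have hWW : ∀ i' j, W i' j = ((P (Fin.last N) j *
      (seqProd Pl i' * (seqProd Pl i')ᴴ) * (P (Fin.last N) j)ᴴ).trace).re := by
    intro i' j
    show ((seqProd P (Fin.snoc i' j) * (seqProd P (Fin.snoc i' j))ᴴ).trace).re = _
    rw [hsnoc i' j]
    simp only [Matrix.conjTranspose_mul, Matrix.mul_assoc]
  have hsum_f : ∀ i', ∑ j, f i' j = p i' := by
    intro i'
    rw [Finset.sum_congr rfl fun j _ => hfW i' j]
    exact sum_re_trace_cg hQh hQi hQ1 _
  have hsum_W : ∀ i', ∑ j, W i' j = V i' := by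
    intro i'
    rw [Finset.sum_congr rfl fun j _ => hWW i' j]
    exact sum_re_trace_cg hQh hQi hQ1 _
  have hf0 : ∀ i' j, 0 ≤ f i' j :=
    fun i' j => re_trace_nonneg_of_posSemidef (hρpsd.mul_mul_conjTranspose_same _)
  have hW0 : ∀ i' j, 0 ≤ W i' j :=
    fun i' j => re_trace_mul_conjTranspose_self_nonneg _
  have hp0 : ∀ i', 0 ≤ p i' :=
    fun i' => re_trace_nonneg_of_posSemidef (hρpsd.mul_mul_conjTranspose_same _)
  have hV0 : ∀ i', 0 ≤ V i' :=
    fun i' => re_trace_mul_conjTranspose_self_nonneg _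
  have hWf : ∀ i' j, W i' j = 0 → f i' j = 0 := by
    intro i' j h
    have hS : seqProd P (Fin.snoc i' j) = 0 := eq_zero_of_re_trace_mul_conjTranspose_self h
    show ((seqProd P (Fin.snoc i' j) * ρ * (seqProd P (Fin.snoc i' j))ᴴ).trace).re = 0
    rw [hS]
    simp
  have hVzero : ∀ i', V i' = 0 → (∀ j, W i' j = 0) ∧ p i' = 0 := by
    intro i' h
    have hA : seqProd Pl i' = 0 := eq_zero_of_re_trace_mul_conjTranspose_self h
    constructor
    · intro j
      show ((seqProd P (Fin.snoc i' j) * (seqProd P (Fin.snoc i' j))ᴴ).trace).re = 0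
      rw [hsnoc i' j, hA]
      simp
    · show ((seqProd Pl i' * ρ * (seqProd Pl i')ᴴ).trace).re = 0
      rw [hA]
      simp
  have hg0 : ∀ i' j, 0 ≤ g i' j :=
    fun i' j => mul_nonneg (hW0 i' j) (div_nonneg (hp0 i') (hV0 i'))
  have hgf : ∀ i' j, g i' j = 0 → f i' j = 0 := by
    intro i' j h
    rcases mul_eq_zero.mp h with h | h
    · exact hWf i' j h
    · rcases div_eq_zero_iff.mp h with h | h
      · have h0 : ∑ j, f i' j = 0 := by rw [hsum_f, h]
        exact (Finset.sum_eq_zero_iff_of_nonneg (fun j _ => hf0 i' j)).mp h0 j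
          (Finset.mem_univ j)
      · exact hWf i' j ((hVzero i' h).1 j)
  have hsum_g : ∀ i', ∑ j, g i' j = p i' := by
    intro i'
    by_cases h : V i' = 0
    · obtain ⟨hW', hp'⟩ := hVzero i' h
      rw [hp']
      exact Finset.sum_eq_zero fun j _ => by rw [hgdef]; simp only; rw [hW' j, zero_mul]
    · show ∑ j, W i' j * (p i' / V i') = p i'
      rw [← Finset.sum_mul, hsum_W i', mul_comm, div_mul_cancel₀ _ h]
  have hGib : ∀ i', 0 ≤ ∑ j, f i' j * Real.log (f i' j / g i' j) ∧
      ((∑ j, f i' j * Real.log (f i' j / g i' j)) = 0 ↔ ∀ j, f i' j = g i' j) :=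
    fun i' => gibbs (f i') (g i') (hf0 i') (hg0 i') (hgf i')
      (by rw [hsum_f i', hsum_g i'])
  have hterm : ∀ i' j, f i' j * Real.log (f i' j / g i' j)
      = f i' j * Real.log (f i' j / W i' j) - f i' j * Real.log (p i' / V i') := by
    intro i' j
    by_cases hfz : f i' j = 0
    · simp [hfz]
    · have hgz : g i' j ≠ 0 := fun h => hfz (hgf i' j h)
      have hWz : W i' j ≠ 0 := fun h => hgz (by rw [hgdef]; simp only; rw [h, zero_mul])
      have hpV : p i' / V i' ≠ 0 := fun h => hgz (by rw [hgdef]; simp only; rw [h, mul_zero])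
      rw [show g i' j = W i' j * (p i' / V i') from rfl,
        Real.log_div hfz (mul_ne_zero hWz hpV), Real.log_mul hWz hpV,
        Real.log_div hfz hWz]
      ring
  have hD : ∀ i', ∑ j, f i' j * Real.log (f i' j / g i' j)
      = (∑ j, f i' j * Real.log (f i' j / W i' j)) - p i' * Real.log (p i' / V i') := by
    intro i'
    rw [Finset.sum_congr rfl fun j _ => hterm i' j, Finset.sum_sub_distrib,
      ← Finset.sum_mul, hsum_f i']
  have htot : mObsEntropy Pl ρ - mObsEntropy P ρ
      = ∑ i', ∑ j, f i' j * Real.log (f i' j / g i' j) := by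
    have h1 : ∑ i : (∀ k, ι k), mProb P ρ i * Real.log (mProb P ρ i / mVol P i)
        = ∑ i', ∑ j, f i' j * Real.log (f i' j / W i' j) :=
      sum_snoc (fun i => mProb P ρ i * Real.log (mProb P ρ i / mVol P i))
    have h2 : ∑ i', ∑ j, f i' j * Real.log (f i' j / g i' j)
        = (∑ i', ∑ j, f i' j * Real.log (f i' j / W i' j))
          - ∑ i', p i' * Real.log (p i' / V i') := by
      rw [← Finset.sum_sub_distrib]
      exact Finset.sum_congr rfl fun i' _ => hD i'
    rw [h2, ← h1]
    simp only [mObsEntropy, hpdef, hVdef]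
    ring
  have hnonneg : 0 ≤ ∑ i', ∑ j, f i' j * Real.log (f i' j / g i' j) :=
    Finset.sum_nonneg fun i' _ => (hGib i').1
  constructor
  · linarith [htot, hnonneg]
  constructor
  · intro heq i
    rw [heq, sub_self] at htot
    have hall : ∀ i' j, f i' j = g i' j := fun i' =>
      ((hGib i').2).mp ((Finset.sum_eq_zero_iff_of_nonneg
        (fun i' _ => (hGib i').1)).mp htot.symm i' (Finset.mem_univ i'))
    have hthis := hall (Fin.init i) (i (Fin.last N))
    simp only [hfdef, hgdef, hWdef, hpdef, hVdef] at hthis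
    rw [Fin.snoc_init_self] at hthis
    rw [hthis]
    have e : (fun k : Fin N => i k.castSucc) = Fin.init i := rfl
    rw [e]
    ring
  · intro h
    have hz : ∀ i' j, f i' j = g i' j := by
      intro i' j
      have hi := h (Fin.snoc i' j)
      have e : (fun k : Fin N => (Fin.snoc i' j : ∀ k, ι k) k.castSucc) = i' :=
        funext fun k => Fin.snoc_castSucc j i' k
      rw [e] at hi
      simp only [hfdef, hgdef, hWdef, hpdef, hVdef]
      rw [hi]
      ring
    have hzero : ∑ i', ∑ j, f i' j * Real.log (f i' j / g i' j) = 0 :=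
      Finset.sum_eq_zero fun i' _ => ((hGib i').2).mpr (hz i')
    linarith [htot, hzero]
end

section
/- For a single coarse-graining C = {P_i}, the observational entropy equals the von Neumann entropy of the coarse-grained state: S_O(C)(ρ) = S(Σ_i (p_i/tr P_i) P_i), where p_i = tr(P_i ρ). -/
open scoped BigOperators ComplexOrder
open Matrix

section Aux

variable {n : Type} [Fintype n] [DecidableEq n] {ι : Type} [Fintype ι]

/-- A nonzero Hermitian idempotent has nonzero real trace. -/
lemma trace_re_ne_zero_of_proj {Q : Matrix n n ℂ} (hH : Q.IsHermitian) (hidem : Q * Q = Q)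
    (hne : Q ≠ 0) : (Q.trace).re ≠ 0 := by
  have h1 : Q.trace = (Qᴴ * Q).trace := by rw [hH, hidem]
  have h2 : (Qᴴ * Q).trace = ∑ j, ∑ i, (starRingEnd ℂ) (Q i j) * Q i j := by
    simp [Matrix.trace, Matrix.diag, Matrix.mul_apply, Matrix.conjTranspose_apply]
  have h3 : (Q.trace).re = ∑ j, ∑ i, Complex.normSq (Q i j) := by
    rw [h1, h2, Complex.re_sum]
    refine Finset.sum_congr rfl fun j _ => ?_
    rw [Complex.re_sum]
    refine Finset.sum_congr rfl fun i _ => ?_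
    simp [Complex.normSq_eq_conj_mul_self, Complex.normSq_apply]
  intro h0
  rw [h3] at h0
  have hz : ∀ j ∈ Finset.univ, ∀ i ∈ Finset.univ, Complex.normSq (Q i j) = 0 := by
    have := (Finset.sum_eq_zero_iff_of_nonneg (fun j _ => Finset.sum_nonneg
      (fun i _ => Complex.normSq_nonneg _))).mp h0
    intro j hj i hi
    exact (Finset.sum_eq_zero_iff_of_nonneg (fun i _ => Complex.normSq_nonneg _)).mp
      (this j hj) i hi
  apply hne
  ext i j
  simpa using Complex.normSq_eq_zero.mp (hz j (Finset.mem_univ _) i (Finset.mem_univ _))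

/-- Powers of a combination of orthogonal projectors summing to the identity. -/
lemma pow_sum_smul_proj {P : ι → Matrix n n ℂ}
    (hidem : ∀ i, P i * P i = P i) (horth : ∀ i j, i ≠ j → P i * P j = 0)
    (hsum : ∑ i, P i = 1) (c : ι → ℂ) (k : ℕ) :
    (∑ i, c i • P i) ^ k = ∑ i, (c i) ^ k • P i := by
  induction k with
  | zero => simp [hsum]
  | succ m ih =>
    rw [pow_succ, ih, Finset.sum_mul_sum]
    refine Finset.sum_congr rfl fun i _ => ?_
    rw [Finset.sum_eq_single i]
    · rw [smul_mul_assoc, mul_smul_comm, hidem i, smul_smul, ← pow_succ]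
    · intro j _ hj
      rw [smul_mul_assoc, mul_smul_comm, horth i j (Ne.symm hj), smul_zero, smul_zero]
    · intro h; exact absurd (Finset.mem_univ i) h

/-- Powers of a unitary conjugation. -/
lemma myConjPow {U D : Matrix n n ℂ} (hU : star U * U = 1) (k : ℕ) :
    (U * D * star U) ^ k = U * D ^ k * star U := by
  induction k with
  | zero =>
    have : U * star U = 1 := mul_eq_one_comm.mpr hU
    simpa [pow_zero, Matrix.mul_one] using this.symm
  | succ m ih =>
    rw [pow_succ, ih, pow_succ]
    simp only [Matrix.mul_assoc]
    rw [← Matrix.mul_assoc (star U) U, hU, Matrix.one_mul]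

/-- Trace of powers of a Hermitian matrix via its eigenvalues. -/
lemma trace_pow_eq_sum_eigenvalues_pow {A : Matrix n n ℂ} (hA : A.IsHermitian) (k : ℕ) :
    (A ^ k).trace = ∑ j, ((hA.eigenvalues j : ℝ) : ℂ) ^ k := by
  have hU : (star (hA.eigenvectorUnitary : Matrix n n ℂ)) *
      (hA.eigenvectorUnitary : Matrix n n ℂ) = 1 :=
    Matrix.mem_unitaryGroup_iff'.mp hA.eigenvectorUnitary.2
  conv_lhs => rw [hA.spectral_theorem, Unitary.conjStarAlgAut_apply, myConjPow hU]
  rw [Matrix.trace_mul_cycle, hU, Matrix.one_mul, Matrix.diagonal_pow,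
    Matrix.trace_diagonal]
  simp

/-- Transfer of moments to polynomial evaluation. -/
lemma sum_eval_eq_of_moments {lam : n → ℝ} {c v : ι → ℝ}
    (hmom : ∀ k : ℕ, ∑ j, (lam j) ^ k = ∑ i, (c i) ^ k * v i) (q : Polynomial ℝ) :
    ∑ j, q.eval (lam j) = ∑ i, q.eval (c i) * v i := by
  have hev : ∀ x : ℝ, q.eval x = ∑ k ∈ Finset.range (q.natDegree + 1), q.coeff k * x ^ k :=
    fun x => q.eval_eq_sum_range x
  simp only [hev]
  rw [Finset.sum_comm]
  simp only [← Finset.mul_sum]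
  rw [Finset.sum_congr rfl fun k _ => by rw [hmom k]]
  rw [show (∑ k ∈ Finset.range (q.natDegree + 1), q.coeff k * ∑ i, c i ^ k * v i)
      = ∑ k ∈ Finset.range (q.natDegree + 1), ∑ i, q.coeff k * (c i ^ k * v i) by
    exact Finset.sum_congr rfl fun k _ => Finset.mul_sum _ _ _]
  rw [Finset.sum_comm]
  refine Finset.sum_congr rfl fun i _ => ?_
  rw [Finset.sum_mul]
  exact Finset.sum_congr rfl fun k _ => by ring

/-- Transfer of moments to `x ↦ x log x` via Lagrange interpolation. -/
lemma sum_xlogx_eq_of_moments {lam : n → ℝ} {c v : ι → ℝ}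
    (hmom : ∀ k : ℕ, ∑ j, (lam j) ^ k = ∑ i, (c i) ^ k * v i) :
    ∑ j, lam j * Real.log (lam j) = ∑ i, (c i * Real.log (c i)) * v i := by
  classical
  set g : ℝ → ℝ := fun x => x * Real.log x with hg
  set s : Finset ℝ := (Finset.image lam Finset.univ) ∪ (Finset.image c Finset.univ) with hs
  set q : Polynomial ℝ := Lagrange.interpolate s id g with hqdef
  have hnode : ∀ x ∈ s, q.eval x = g x := by
    intro x hx
    exact Lagrange.eval_interpolate_at_node g (Set.injOn_id _) hx
  have h1 : ∑ j, q.eval (lam j) = ∑ j, g (lam j) :=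
    Finset.sum_congr rfl fun j _ => hnode _ (Finset.mem_union_left _
      (Finset.mem_image_of_mem _ (Finset.mem_univ j)))
  have h2 : ∑ i, q.eval (c i) * v i = ∑ i, g (c i) * v i :=
    Finset.sum_congr rfl fun i _ => by rw [hnode _ (Finset.mem_union_right _
      (Finset.mem_image_of_mem _ (Finset.mem_univ i)))]
  calc ∑ j, lam j * Real.log (lam j) = ∑ j, q.eval (lam j) := h1.symm
    _ = ∑ i, q.eval (c i) * v i := sum_eval_eq_of_moments hmom q
    _ = ∑ i, (c i * Real.log (c i)) * v i := h2

end Aux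

/-- for a single coarse-graining, observational entropy equals the von Neumann
entropy of the coarse-grained state: `S_O(C)(ρ) = S(∑_i (p_i / tr P_i) P_i)`. -/
theorem obsEntropy_eq_vnEntropy_coarseGrained {n : Type} [Fintype n] [DecidableEq n]
    {ι : Type} [Fintype ι]
    (P : ι → Matrix n n ℂ) (ρ : Matrix n n ℂ)
    (hP : IsCoarseGraining P) (hρ : IsDensityMatrix ρ)
    (hσ : (∑ i, ((prob P ρ i / vol P i : ℝ) : ℂ) • P i).IsHermitian) :
    obsEntropy P ρ = vnEntropy hσ := by
  classical
  obtain ⟨hHerm, hidem, hne, horth, hsum⟩ := hP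
  set c : ι → ℝ := fun i => prob P ρ i / vol P i with hc
  set v : ι → ℝ := fun i => vol P i with hv
  -- trace of P i is real and equals v i
  have htrP : ∀ i, (P i).trace = ((v i : ℝ) : ℂ) := by
    intro i
    have h := Matrix.trace_conjTranspose (P i)
    rw [hHerm i] at h
    exact (Complex.conj_eq_iff_re.mp h.symm).symm
  have hvne : ∀ i, v i ≠ 0 := fun i =>
    trace_re_ne_zero_of_proj (hHerm i) (hidem i) (hne i)
  -- moment identities
  have hmom : ∀ k : ℕ, ∑ j, (hσ.eigenvalues j) ^ k = ∑ i, (c i) ^ k * v i := by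
    intro k
    have h1 : ((∑ i, ((c i : ℝ) : ℂ) • P i) ^ k).trace
        = ∑ j, ((hσ.eigenvalues j : ℝ) : ℂ) ^ k :=
      trace_pow_eq_sum_eigenvalues_pow hσ k
    have h2 : (∑ i, ((c i : ℝ) : ℂ) • P i) ^ k = ∑ i, ((c i : ℝ) : ℂ) ^ k • P i :=
      pow_sum_smul_proj hidem horth hsum (fun i => ((c i : ℝ) : ℂ)) k
    have h3 : ((∑ i, ((c i : ℝ) : ℂ) • P i) ^ k).trace
        = ∑ i, ((c i : ℝ) : ℂ) ^ k * ((v i : ℝ) : ℂ) := by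
      rw [h2, Matrix.trace_sum]
      exact Finset.sum_congr rfl fun i _ => by rw [Matrix.trace_smul, htrP i, smul_eq_mul]
    have h4 : (∑ j, ((hσ.eigenvalues j : ℝ) : ℂ) ^ k)
        = ∑ i, ((c i : ℝ) : ℂ) ^ k * ((v i : ℝ) : ℂ) := by rw [← h1, h3]
    exact_mod_cast h4
  have hkey : ∑ j, hσ.eigenvalues j * Real.log (hσ.eigenvalues j)
      = ∑ i, (c i * Real.log (c i)) * v i := sum_xlogx_eq_of_moments hmom
  have hfinal : ∑ i, (c i * Real.log (c i)) * v i
      = ∑ i, prob P ρ i * Real.log (c i) := by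
    refine Finset.sum_congr rfl fun i _ => ?_
    have : c i * v i = prob P ρ i := by
      rw [hc]; exact div_mul_cancel₀ _ (hvne i)
    calc (c i * Real.log (c i)) * v i = (c i * v i) * Real.log (c i) := by ring
      _ = prob P ρ i * Real.log (c i) := by rw [this]
  rw [obsEntropy, vnEntropy, hkey, hfinal]
end

section
/- Observational entropy equals ln dim H minus the Kullback-Leibler divergence between the measurement probability distribution of ρ and that of the maximally mixed state: S_O(C₁,…,C_n)(ρ) = ln dim H − D_KL(P(ρ) || P(I/dim H)). -/
open scoped BigOperators ComplexOrder
open Matrix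

lemma seqProd_cons {n : Type} [Fintype n] [DecidableEq n] {N : ℕ} {ι : Fin (N + 1) → Type}
    (P : ∀ k, ι k → Matrix n n ℂ) (a : ι 0) (f : ∀ k : Fin N, ι k.succ) :
    seqProd P (Fin.cons a f) = seqProd (fun k => P k.succ) f * P 0 a := by
  unfold seqProd
  rw [List.finRange_succ]
  simp [List.map_map, Function.comp_def]

lemma sum_conjT_mul_seqProd {n : Type} [Fintype n] [DecidableEq n] :
    ∀ {N : ℕ} {ι : Fin N → Type} [∀ k, Fintype (ι k)]
      (P : ∀ k, ι k → Matrix n n ℂ), (∀ k, IsCoarseGraining (P k)) →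
      ∑ i : (∀ k, ι k), (seqProd P i)ᴴ * seqProd P i = 1 := by
  intro N
  induction N with
  | zero =>
    intro ι _ P hP
    simp [seqProd]
  | succ N ih =>
    intro ι _ P hP
    rw [← Equiv.sum_comp (Fin.consEquiv ι), Fintype.sum_prod_type]
    have key : ∀ a : ι 0,
        (∑ f : ∀ k : Fin N, ι k.succ,
          (seqProd P ((Fin.consEquiv ι) (a, f)))ᴴ * seqProd P ((Fin.consEquiv ι) (a, f)))
          = P 0 a := by
      intro a
      have hterm : ∀ f : ∀ k : Fin N, ι k.succ,
          (seqProd P ((Fin.consEquiv ι) (a, f)))ᴴ * seqProd P ((Fin.consEquiv ι) (a, f))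
          = (P 0 a)ᴴ * ((seqProd (fun k => P k.succ) f)ᴴ * seqProd (fun k => P k.succ) f)
              * P 0 a := by
        intro f
        show (seqProd P (Fin.cons a f))ᴴ * seqProd P (Fin.cons a f) = _
        rw [seqProd_cons, Matrix.conjTranspose_mul]
        simp [Matrix.mul_assoc]
      rw [Finset.sum_congr rfl fun f _ => hterm f]
      rw [← Finset.sum_mul, ← Finset.mul_sum, ih (fun k => P k.succ) (fun k => hP k.succ)]
      rw [Matrix.mul_one, ((hP 0).1 a).eq, (hP 0).2.1 a]
    rw [Finset.sum_congr rfl fun a _ => key a]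
    exact (hP 0).2.2.2.2

lemma sum_mProb {n : Type} [Fintype n] [DecidableEq n] {N : ℕ} {ι : Fin N → Type}
    [∀ k, Fintype (ι k)] (P : ∀ k, ι k → Matrix n n ℂ) (ρ : Matrix n n ℂ)
    (hP : ∀ k, IsCoarseGraining (P k)) (hρ : IsDensityMatrix ρ) :
    ∑ i : (∀ k, ι k), mProb P ρ i = 1 := by
  have h : ∀ i : (∀ k, ι k), mProb P ρ i
      = ((((seqProd P i)ᴴ * seqProd P i) * ρ).trace).re := by
    intro i
    unfold mProb
    rw [Matrix.trace_mul_comm, Matrix.mul_assoc]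
  rw [Finset.sum_congr rfl fun i _ => h i, ← Complex.re_sum, ← Matrix.trace_sum]
  have : ∑ i : (∀ k, ι k), ((seqProd P i)ᴴ * seqProd P i) * ρ
      = (∑ i : (∀ k, ι k), (seqProd P i)ᴴ * seqProd P i) * ρ := by
    rw [Finset.sum_mul]
  rw [this, sum_conjT_mul_seqProd P hP, Matrix.one_mul, hρ.2]
  simp

lemma mProb_eq_zero_of_mVol {n : Type} [Fintype n] [DecidableEq n] {N : ℕ} {ι : Fin N → Type}
    [∀ k, Fintype (ι k)] (P : ∀ k, ι k → Matrix n n ℂ) (ρ : Matrix n n ℂ)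
    (i : ∀ k, ι k) (h : mVol P i = 0) : mProb P ρ i = 0 := by
  have hz : seqProd P i = 0 := by
    set A := seqProd P i with hA
    have htr : ((A * Aᴴ).trace).re = ∑ j, ∑ k, Complex.normSq (A j k) := by
      simp only [Matrix.trace, Matrix.diag, Matrix.mul_apply, Matrix.conjTranspose_apply,
        Complex.re_sum]
      refine Finset.sum_congr rfl fun j _ => Finset.sum_congr rfl fun k _ => ?_
      simp [Complex.mul_re, Complex.normSq_apply]
    have h0 : ∑ j, ∑ k, Complex.normSq (A j k) = 0 := by
      rw [← htr]; exact h
    ext j k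
    have hjk := (Finset.sum_eq_zero_iff_of_nonneg
      (fun j _ => Finset.sum_nonneg fun k _ => Complex.normSq_nonneg _)).mp h0 j
      (Finset.mem_univ j)
    have := (Finset.sum_eq_zero_iff_of_nonneg
      (fun k _ => Complex.normSq_nonneg _)).mp hjk k (Finset.mem_univ k)
    simpa using Complex.normSq_eq_zero.mp this
  unfold mProb
  simp [hz]

/-- observational entropy equals `ln dim H` minus the Kullback–Leibler divergence
between the measurement distribution of `ρ` and that of the maximally mixed state
(whose probabilities are `V_{i₁,…,i_n} / dim H`). -/
theorem mObsEntropy_eq_log_sub_KL {n : Type} [Fintype n] [DecidableEq n] {N : ℕ}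
    {ι : Fin N → Type} [∀ k, Fintype (ι k)]
    (P : ∀ k, ι k → Matrix n n ℂ) (ρ : Matrix n n ℂ)
    (hP : ∀ k, IsCoarseGraining (P k)) (hρ : IsDensityMatrix ρ) :
    mObsEntropy P ρ =
      Real.log (Fintype.card n) -
        ∑ i : (∀ k, ι k),
          mProb P ρ i * Real.log (mProb P ρ i / (mVol P i / (Fintype.card n))) :=  by
  have hcard : (0 : ℝ) < (Fintype.card n : ℝ) := by
    by_contra hc
    push_neg at hc
    have : Fintype.card n = 0 := by exact_mod_cast le_antisymm (by exact_mod_cast hc) (Nat.zero_le _)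
    have hemp : IsEmpty n := Fintype.card_eq_zero_iff.mp this
    have := hρ.2
    rw [Matrix.trace] at this
    simp [Finset.univ_eq_empty] at this
  set d : ℝ := (Fintype.card n : ℝ) with hd
  have hterm : ∀ i : (∀ k, ι k),
      mProb P ρ i * Real.log (mProb P ρ i / (mVol P i / d))
      = mProb P ρ i * Real.log (mProb P ρ i / mVol P i) + mProb P ρ i * Real.log d := by
    intro i
    by_cases hp : mProb P ρ i = 0
    · simp [hp]
    · have hV : mVol P i ≠ 0 := fun hV0 => hp (mProb_eq_zero_of_mVol P ρ i hV0)
      have : mProb P ρ i / (mVol P i / d) = (mProb P ρ i / mVol P i) * d := by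
        field_simp
      rw [this, Real.log_mul (div_ne_zero hp hV) (ne_of_gt hcard), mul_add]
  rw [Finset.sum_congr rfl fun i _ => hterm i, Finset.sum_add_distrib, ← Finset.sum_mul,
    sum_mProb P ρ hP hρ, one_mul, mObsEntropy]
  ring
end
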